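/- arXiv:1403.2675 — 3 statements merged into one kernel-verified Lean document; each statement's English description precedes it below -/
import Mathlib

section
/- Let G = PU(n) ⋊ ⟨τ₀⟩ and G̃ = (U(n)/⟨−I⟩) ⋊ ⟨τ⟩, and let π' : G̃ → G be the natural surjection (induced by U(n)/⟨−I⟩ → PU(n) and τ ↦ τ₀), whose kernel is Z_n/⟨−I⟩. If F is an abelian subgroup of G not contained in PU(n), then there exists an abelian subgroup F' of G̃ such that π'(F') = F and F' ∩ (Z_n/⟨−I⟩) = ⟨[iI_n]⟩, the order-2 subgroup generated by the class of iI_n. Moreover, F' is determined by F up to conjugation by an element of Z_n/⟨−I⟩. -/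
open Matrix

noncomputable section

/-- The unitary group `U(ι)` of complex unitary matrices indexed by `ι`. -/
abbrev UG (ι : Type) [Fintype ι] [DecidableEq ι] := Matrix.unitaryGroup ι ℂ

variable (ι : Type) [Fintype ι] [DecidableEq ι]

/-- The central subgroup `Z_n = {λ I : |λ| = 1}` of scalar unitary matrices. -/
def scalarSG : Subgroup (UG ι) where
  carrier := {A | ∃ c : ℂ, ‖c‖ = 1 ∧ (A : Matrix ι ι ℂ) = c • (1 : Matrix ι ι ℂ)}
  one_mem' := ⟨1, by simp, by simp⟩
  mul_mem' := by
    rintro A B ⟨a, ha, hA⟩ ⟨b, hb, hB⟩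
    exact ⟨a * b, by simp [ha, hb], by
      simp only [Matrix.UnitaryGroup.mul_val, hA, hB, smul_mul_smul_comm, mul_one]⟩
  inv_mem' := by
    rintro A ⟨a, ha, hA⟩
    refine ⟨star a, by simpa using ha, ?_⟩
    have : ((A⁻¹ : UG ι) : Matrix ι ι ℂ) = star (A : Matrix ι ι ℂ) :=
      Matrix.UnitaryGroup.inv_val A
    rw [this, hA]
    simp [Matrix.star_eq_conjTranspose, Matrix.conjTranspose_smul]

instance scalarSG_normal : (scalarSG ι).Normal := by
  constructor
  rintro A ⟨a, ha, hA⟩ g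
  refine ⟨a, ha, ?_⟩
  have h1 : ((g * A * g⁻¹ : UG ι) : Matrix ι ι ℂ)
      = (g : Matrix ι ι ℂ) * (A : Matrix ι ι ℂ) * ((g⁻¹ : UG ι) : Matrix ι ι ℂ) := rfl
  rw [h1, hA]
  have h2 : (g : Matrix ι ι ℂ) * ((g⁻¹ : UG ι) : Matrix ι ι ℂ) = 1 := by
    have := Matrix.UnitaryGroup.mul_val g g⁻¹
    rw [mul_inv_cancel] at this
    simpa using this.symm
  calc (g : Matrix ι ι ℂ) * (a • (1 : Matrix ι ι ℂ)) * ((g⁻¹ : UG ι) : Matrix ι ι ℂ)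
      = a • ((g : Matrix ι ι ℂ) * ((g⁻¹ : UG ι) : Matrix ι ι ℂ)) := by
        simp [mul_smul_comm, smul_mul_assoc]
    _ = a • (1 : Matrix ι ι ℂ) := by rw [h2]

/-- The projective unitary group `PU(ι) = U(ι)/Z`. -/
abbrev PU := UG ι ⧸ scalarSG ι

variable {ι}

lemma conjTranspose_map_conj (A : Matrix ι ι ℂ) :
    (A.map (starRingEnd ℂ))ᴴ = Aᵀ := by
  ext i j
  simp [Matrix.conjTranspose_apply, Matrix.map_apply]

/-- Entrywise complex conjugation on the unitary group. -/
def conjUG (A : UG ι) : UG ι :=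
  ⟨(A : Matrix ι ι ℂ).map (starRingEnd ℂ), by
    rw [Matrix.mem_unitaryGroup_iff]
    have h1 : ((A : Matrix ι ι ℂ) * star (A : Matrix ι ι ℂ)).map (starRingEnd ℂ)
        = (A : Matrix ι ι ℂ).map (starRingEnd ℂ)
          * (star (A : Matrix ι ι ℂ)).map (starRingEnd ℂ) :=
      Matrix.map_mul
    have hA : (A : Matrix ι ι ℂ) * star (A : Matrix ι ι ℂ) = 1 :=
      Matrix.mem_unitaryGroup_iff.mp A.2
    rw [hA] at h1
    have h2 : ((1 : Matrix ι ι ℂ)).map (starRingEnd ℂ) = 1 := by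
      ext i j; simp [Matrix.map_apply, Matrix.one_apply, apply_ite]
    have h3 : star ((A : Matrix ι ι ℂ).map (starRingEnd ℂ))
        = (star (A : Matrix ι ι ℂ)).map (starRingEnd ℂ) := by
      ext i j
      simp [Matrix.star_eq_conjTranspose, Matrix.conjTranspose_apply, Matrix.map_apply]
    rw [h3, ← h1, h2]⟩

@[simp] lemma conjUG_conjUG (A : UG ι) : conjUG (conjUG A) = A := by
  apply Subtype.ext
  show ((A : Matrix ι ι ℂ).map (starRingEnd ℂ)).map (starRingEnd ℂ) = (A : Matrix ι ι ℂ)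
  ext i j
  simp [Matrix.map_apply]

/-- Entrywise complex conjugation as an automorphism of the unitary group. -/
def conjUGE : UG ι ≃* UG ι where
  toFun := conjUG
  invFun := conjUG
  left_inv := conjUG_conjUG
  right_inv := conjUG_conjUG
  map_mul' A B := by
    apply Subtype.ext
    show ((A * B : UG ι) : Matrix ι ι ℂ).map (starRingEnd ℂ)
        = (A : Matrix ι ι ℂ).map (starRingEnd ℂ) * (B : Matrix ι ι ℂ).map (starRingEnd ℂ)
    rw [Matrix.UnitaryGroup.mul_val]
    exact Matrix.map_mul

variable (ι)

lemma scalarSG_le_comap_conjUGE :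
    scalarSG ι ≤ (scalarSG ι).comap (conjUGE : UG ι ≃* UG ι).toMonoidHom := by
  rintro A ⟨a, ha, hA⟩
  refine ⟨starRingEnd ℂ a, by simpa using ha, ?_⟩
  show ((A : Matrix ι ι ℂ).map (starRingEnd ℂ)) = _
  rw [hA]
  ext i j
  by_cases h : i = j <;>
    simp [Matrix.map_apply, Matrix.smul_apply, Matrix.one_apply, h]

/-- The complex conjugation automorphism `τ₀` of `PU(ι)`. -/
def tauPU : PU ι ≃* PU ι where
  toFun := QuotientGroup.map (scalarSG ι) (scalarSG ι) (conjUGE : UG ι ≃* UG ι).toMonoidHom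
    (scalarSG_le_comap_conjUGE ι)
  invFun := QuotientGroup.map (scalarSG ι) (scalarSG ι) (conjUGE : UG ι ≃* UG ι).toMonoidHom
    (scalarSG_le_comap_conjUGE ι)
  left_inv := by
    intro x
    induction x using QuotientGroup.induction_on with
    | H A => rw [QuotientGroup.map_mk, QuotientGroup.map_mk]
             exact congrArg _ (conjUG_conjUG A)
  right_inv := by
    intro x
    induction x using QuotientGroup.induction_on with
    | H A => rw [QuotientGroup.map_mk, QuotientGroup.map_mk]
             exact congrArg _ (conjUG_conjUG A)
  map_mul' := map_mul _


end

noncomputable section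

variable (ι : Type) [Fintype ι] [DecidableEq ι]

lemma tauPU_mul_tauPU : (tauPU ι) * (tauPU ι) = 1 :=
  DFunLike.ext _ _ fun x => by
    rw [MulAut.mul_apply, MulAut.one_apply]
    exact (tauPU ι).left_inv x

/-- The action of `⟨τ₀⟩ ≅ ℤ/2ℤ` on `PU(ι)` by complex conjugation. -/
def actPU : Multiplicative (ZMod 2) →* MulAut (PU ι) where
  toFun x := (tauPU ι) ^ (Multiplicative.toAdd x).val
  map_one' := by
    show (tauPU ι) ^ (Multiplicative.toAdd (1 : Multiplicative (ZMod 2))).val = 1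
    simp
  map_mul' a b := by
    show (tauPU ι) ^ (Multiplicative.toAdd (a * b)).val
        = (tauPU ι) ^ (Multiplicative.toAdd a).val * (tauPU ι) ^ (Multiplicative.toAdd b).val
    have h2 : (tauPU ι) ^ 2 = 1 := by rw [pow_two]; exact tauPU_mul_tauPU ι
    have hab : (Multiplicative.toAdd (a * b))
        = Multiplicative.toAdd a + Multiplicative.toAdd b := rfl
    rw [hab, ZMod.val_add, ← pow_eq_pow_mod _ h2, pow_add]

/-- The group `PU(ι) ⋊ ⟨τ₀⟩`. -/
abbrev GA := SemidirectProduct (PU ι) (Multiplicative (ZMod 2)) (actPU ι)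

end

noncomputable section

variable (ι : Type) [Fintype ι] [DecidableEq ι]

/-- `-I` as an element of the unitary group. -/
def negOneU : UG ι := ⟨(-1 : Matrix ι ι ℂ), by
  rw [Matrix.mem_unitaryGroup_iff]; simp⟩

/-- The central subgroup `⟨-I⟩` of the unitary group. -/
def negUSG : Subgroup (UG ι) := Subgroup.zpowers (negOneU ι)

lemma negOneU_mem_scalarSG : negOneU ι ∈ scalarSG ι :=
  ⟨-1, by simp, by simp [negOneU]⟩

lemma negUSG_le_scalarSG : negUSG ι ≤ scalarSG ι :=
  Subgroup.zpowers_le.mpr (negOneU_mem_scalarSG ι)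

instance negUSG_normal : (negUSG ι).Normal := by
  constructor
  intro x hx g
  obtain ⟨k, rfl⟩ := Subgroup.mem_zpowers_iff.mp hx
  have h2 : (g : Matrix ι ι ℂ) * ((g⁻¹ : UG ι) : Matrix ι ι ℂ) = 1 := by
    have := Matrix.UnitaryGroup.mul_val g g⁻¹
    rw [mul_inv_cancel] at this
    simpa using this.symm
  have hg : g * negOneU ι * g⁻¹ = negOneU ι := by
    apply Subtype.ext
    show (g : Matrix ι ι ℂ) * ((negOneU ι : UG ι) : Matrix ι ι ℂ)
        * ((g⁻¹ : UG ι) : Matrix ι ι ℂ) = ((negOneU ι : UG ι) : Matrix ι ι ℂ)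
    have hneg : ((negOneU ι : UG ι) : Matrix ι ι ℂ) = -1 := rfl
    rw [hneg]
    calc (g : Matrix ι ι ℂ) * (-1 : Matrix ι ι ℂ) * ((g⁻¹ : UG ι) : Matrix ι ι ℂ)
        = -((g : Matrix ι ι ℂ) * ((g⁻¹ : UG ι) : Matrix ι ι ℂ)) := by
          rw [mul_neg_one, neg_mul]
      _ = -1 := by rw [h2]
  have hmap : g * (negOneU ι) ^ k * g⁻¹ = (g * negOneU ι * g⁻¹) ^ k := by
    have := map_zpow (MulAut.conj g) (negOneU ι) k
    simpa [MulAut.conj_apply] using this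
  rw [hmap, hg]
  exact Subgroup.zpow_mem _ (Subgroup.mem_zpowers _) k

/-- The group `U(ι)/⟨-I⟩`. -/
abbrev UmodNeg := UG ι ⧸ negUSG ι

lemma conjUG_negOneU : conjUG (negOneU ι) = negOneU ι := by
  apply Subtype.ext
  show ((negOneU ι : UG ι) : Matrix ι ι ℂ).map (starRingEnd ℂ)
      = ((negOneU ι : UG ι) : Matrix ι ι ℂ)
  have hneg : ((negOneU ι : UG ι) : Matrix ι ι ℂ) = -1 := rfl
  rw [hneg]
  ext i j
  by_cases h : i = j <;> simp [Matrix.map_apply, Matrix.one_apply, h]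

lemma negUSG_le_comap_conjUGE :
    negUSG ι ≤ (negUSG ι).comap (conjUGE : UG ι ≃* UG ι).toMonoidHom := by
  intro x hx
  obtain ⟨k, rfl⟩ := Subgroup.mem_zpowers_iff.mp hx
  have : (conjUGE : UG ι ≃* UG ι) ((negOneU ι) ^ k) = (negOneU ι) ^ k := by
    rw [map_zpow]
    have h1 : (conjUGE : UG ι ≃* UG ι) (negOneU ι) = negOneU ι := conjUG_negOneU ι
    rw [h1]
  show (conjUGE : UG ι ≃* UG ι) ((negOneU ι) ^ k) ∈ negUSG ι
  rw [this]
  exact Subgroup.zpow_mem _ (Subgroup.mem_zpowers _) k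

/-- The complex conjugation automorphism `τ` of `U(ι)/⟨-I⟩`. -/
def tauU : UmodNeg ι ≃* UmodNeg ι where
  toFun := QuotientGroup.map (negUSG ι) (negUSG ι) (conjUGE : UG ι ≃* UG ι).toMonoidHom
    (negUSG_le_comap_conjUGE ι)
  invFun := QuotientGroup.map (negUSG ι) (negUSG ι) (conjUGE : UG ι ≃* UG ι).toMonoidHom
    (negUSG_le_comap_conjUGE ι)
  left_inv := by
    intro x
    induction x using QuotientGroup.induction_on with
    | H A => rw [QuotientGroup.map_mk, QuotientGroup.map_mk]
             exact congrArg _ (conjUG_conjUG A)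
  right_inv := by
    intro x
    induction x using QuotientGroup.induction_on with
    | H A => rw [QuotientGroup.map_mk, QuotientGroup.map_mk]
             exact congrArg _ (conjUG_conjUG A)
  map_mul' := map_mul _

lemma tauU_mul_tauU : (tauU ι) * (tauU ι) = 1 :=
  DFunLike.ext _ _ fun x => by
    rw [MulAut.mul_apply, MulAut.one_apply]
    exact (tauU ι).left_inv x

/-- The action of `⟨τ⟩ ≅ ℤ/2ℤ` on `U(ι)/⟨-I⟩` by complex conjugation. -/
def actU : Multiplicative (ZMod 2) →* MulAut (UmodNeg ι) where
  toFun x := (tauU ι) ^ (Multiplicative.toAdd x).val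
  map_one' := by
    show (tauU ι) ^ (Multiplicative.toAdd (1 : Multiplicative (ZMod 2))).val = 1
    simp
  map_mul' a b := by
    show (tauU ι) ^ (Multiplicative.toAdd (a * b)).val
        = (tauU ι) ^ (Multiplicative.toAdd a).val * (tauU ι) ^ (Multiplicative.toAdd b).val
    have h2 : (tauU ι) ^ 2 = 1 := by rw [pow_two]; exact tauU_mul_tauU ι
    have hab : (Multiplicative.toAdd (a * b))
        = Multiplicative.toAdd a + Multiplicative.toAdd b := rfl
    rw [hab, ZMod.val_add, ← pow_eq_pow_mod _ h2, pow_add]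

/-- The group `G̃ = (U(ι)/⟨-I⟩) ⋊ ⟨τ⟩`. -/
abbrev GtA := SemidirectProduct (UmodNeg ι) (Multiplicative (ZMod 2)) (actU ι)

/-- The natural projection `U(ι)/⟨-I⟩ →* PU(ι)`. -/
def projUmodNeg : UmodNeg ι →* PU ι :=
  QuotientGroup.map (negUSG ι) (scalarSG ι) (MonoidHom.id _)
    (fun x hx => by simpa using negUSG_le_scalarSG ι hx)

lemma projUmodNeg_tauU (x : UmodNeg ι) :
    projUmodNeg ι (tauU ι x) = tauPU ι (projUmodNeg ι x) := by
  induction x using QuotientGroup.induction_on with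
  | H A => rfl

lemma projUmodNeg_tauU_pow (k : ℕ) (x : UmodNeg ι) :
    projUmodNeg ι (((tauU ι) ^ k) x) = ((tauPU ι) ^ k) (projUmodNeg ι x) := by
  induction k generalizing x with
  | zero => simp
  | succ k ih =>
    calc projUmodNeg ι (((tauU ι) ^ (k + 1)) x)
        = projUmodNeg ι (((tauU ι) ^ k) ((tauU ι) x)) := by rw [pow_succ, MulAut.mul_apply]
      _ = ((tauPU ι) ^ k) (projUmodNeg ι ((tauU ι) x)) := ih _
      _ = ((tauPU ι) ^ k) ((tauPU ι) (projUmodNeg ι x)) := by rw [projUmodNeg_tauU]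
      _ = ((tauPU ι) ^ (k + 1)) (projUmodNeg ι x) := by rw [pow_succ, MulAut.mul_apply]

lemma proj_compat : ∀ g : Multiplicative (ZMod 2),
    (projUmodNeg ι).comp ((actU ι g).toMonoidHom)
      = ((actPU ι g).toMonoidHom).comp (projUmodNeg ι) := by
  intro g
  ext x
  show projUmodNeg ι ((actU ι g) x) = (actPU ι g) (projUmodNeg ι x)
  show projUmodNeg ι (((tauU ι) ^ (Multiplicative.toAdd g).val) x)
      = ((tauPU ι) ^ (Multiplicative.toAdd g).val) (projUmodNeg ι x)
  exact projUmodNeg_tauU_pow ι _ x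

/-- The natural projection `π' : G̃ = (U(ι)/⟨-I⟩) ⋊ ⟨τ⟩ →* G = PU(ι) ⋊ ⟨τ₀⟩`. -/
def piT : GtA ι →* GA ι :=
  SemidirectProduct.map (projUmodNeg ι) (MonoidHom.id _) (proj_compat ι)

/-- The subgroup `Z_n/⟨-I⟩` of `U(ι)/⟨-I⟩`. -/
def ZmodNegSG : Subgroup (UmodNeg ι) :=
  Subgroup.map (QuotientGroup.mk' (negUSG ι)) (scalarSG ι)

/-- `iI` as an element of the unitary group. -/
def iIU : UG ι := ⟨(Complex.I • 1 : Matrix ι ι ℂ), by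
  rw [Matrix.mem_unitaryGroup_iff]
  have : star (Complex.I • (1 : Matrix ι ι ℂ))
      = (starRingEnd ℂ Complex.I) • (1 : Matrix ι ι ℂ) := by
    simp [Matrix.star_eq_conjTranspose, Matrix.conjTranspose_smul]
  rw [this, smul_mul_smul_comm, one_mul]
  simp [Complex.conj_I]⟩

noncomputable section

open SemidirectProduct

variable {ι : Type} [Fintype ι] [DecidableEq ι]

lemma mem_zpowers_iff_of_sq {G : Type*} [Group G] {g : G} (hg : g * g = 1) {x : G} :
    x ∈ Subgroup.zpowers g ↔ x = 1 ∨ x = g := by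
  constructor
  · intro hx
    obtain ⟨k, rfl⟩ := Subgroup.mem_zpowers_iff.mp hx
    have h2 : g ^ (2 : ℤ) = 1 := by rw [zpow_two]; exact hg
    have hk : g ^ k = g ^ (k % 2) := by
      conv_lhs => rw [← Int.mul_ediv_add_emod k 2]
      rw [_root_.zpow_add, _root_.zpow_mul, h2, _root_.one_zpow, one_mul]
    rcases Int.emod_two_eq_zero_or_one k with h | h
    · left; rw [hk, h, zpow_zero]
    · right; rw [hk, h, zpow_one]
  · rintro (rfl | rfl)
    exacts [one_mem _, Subgroup.mem_zpowers _]

lemma negOneU_sq : negOneU ι * negOneU ι = 1 := by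
  apply Subtype.ext
  rw [Matrix.UnitaryGroup.mul_val, Matrix.UnitaryGroup.one_val]
  show (-1 : Matrix ι ι ℂ) * (-1) = 1
  simp

lemma mem_negUSG_iff {x : UG ι} : x ∈ negUSG ι ↔ x = 1 ∨ x = negOneU ι := by
  show x ∈ Subgroup.zpowers (negOneU ι) ↔ _
  exact mem_zpowers_iff_of_sq negOneU_sq

lemma negOneU_mem_negUSG : negOneU ι ∈ negUSG ι := Subgroup.mem_zpowers _

lemma scalar_central {S : UG ι} (hS : S ∈ scalarSG ι) (B : UG ι) : S * B = B * S := by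
  obtain ⟨c, -, hc⟩ := hS
  apply Subtype.ext
  rw [Matrix.UnitaryGroup.mul_val, Matrix.UnitaryGroup.mul_val, hc,
    smul_mul_assoc, mul_smul_comm, one_mul, mul_one]

lemma conjUGE_val (A : UG ι) :
    ((conjUGE A : UG ι) : Matrix ι ι ℂ) = (A : Matrix ι ι ℂ).map (starRingEnd ℂ) := rfl

lemma conjUGE_scalar_val {S : UG ι} {c : ℂ} (hc : (S : Matrix ι ι ℂ) = c • 1) :
    ((conjUGE S : UG ι) : Matrix ι ι ℂ) = (starRingEnd ℂ c) • 1 := by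
  rw [conjUGE_val, hc]
  ext i j
  by_cases h : i = j <;> simp [Matrix.map_apply, Matrix.one_apply, h]

lemma conjUGE_mem_scalarSG {S : UG ι} (hS : S ∈ scalarSG ι) : conjUGE S ∈ scalarSG ι := by
  obtain ⟨c, h1, h2⟩ := hS
  exact ⟨starRingEnd ℂ c, by simpa using h1, conjUGE_scalar_val h2⟩

lemma mul_conj_self {c : ℂ} (hc : ‖c‖ = 1) : c * (starRingEnd ℂ) c = 1 := by
  rw [Complex.mul_conj, Complex.normSq_eq_norm_sq, hc]
  norm_num

lemma conjUGE_scalar_inv {S : UG ι} (hS : S ∈ scalarSG ι) : (conjUGE S : UG ι) = S⁻¹ := by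
  obtain ⟨c, hc1, hc2⟩ := hS
  have h : S * conjUGE S = 1 := by
    apply Subtype.ext
    rw [Matrix.UnitaryGroup.mul_val, conjUGE_scalar_val hc2, hc2,
      Matrix.UnitaryGroup.one_val, smul_mul_smul_comm, one_mul, mul_conj_self hc1, one_smul]
  exact (inv_eq_of_mul_eq_one_right h).symm

lemma smul_one_inj [Nonempty ι] {a b : ℂ} (h : a • (1 : Matrix ι ι ℂ) = b • 1) : a = b := by
  obtain ⟨i⟩ := ‹Nonempty ι›
  have := congrFun (congrFun h i) i
  simpa [Matrix.smul_apply] using this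

/-- Scalar unitary matrix. -/
def scalarU (c : ℂ) (hc : ‖c‖ = 1) : UG ι := ⟨c • 1, by
  rw [Matrix.mem_unitaryGroup_iff]
  have hstar : star (c • (1 : Matrix ι ι ℂ)) = (starRingEnd ℂ c) • 1 := by
    simp [Matrix.star_eq_conjTranspose, Matrix.conjTranspose_smul]
  rw [hstar, smul_mul_smul_comm, one_mul, mul_conj_self hc, one_smul]⟩

lemma mem_ZmodNegSG_iff {k : UmodNeg ι} :
    k ∈ ZmodNegSG ι ↔ ∃ S ∈ scalarSG ι, (QuotientGroup.mk S : UmodNeg ι) = k := by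
  simp [ZmodNegSG, Subgroup.mem_map, QuotientGroup.mk'_apply]

lemma K_central {k : UmodNeg ι} (hk : k ∈ ZmodNegSG ι) (q : UmodNeg ι) : k * q = q * k := by
  obtain ⟨S, hS, rfl⟩ := mem_ZmodNegSG_iff.mp hk
  obtain ⟨B, rfl⟩ := QuotientGroup.mk_surjective q
  rw [← QuotientGroup.mk_mul, ← QuotientGroup.mk_mul, scalar_central hS]

lemma tauU_mk (A : UG ι) :
    tauU ι (QuotientGroup.mk A) = QuotientGroup.mk (conjUGE A) := rfl

lemma tauU_K {k : UmodNeg ι} (hk : k ∈ ZmodNegSG ι) : tauU ι k = k⁻¹ := by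
  obtain ⟨S, hS, rfl⟩ := mem_ZmodNegSG_iff.mp hk
  rw [tauU_mk, conjUGE_scalar_inv hS]
  rfl

lemma K_sqrt {k : UmodNeg ι} (hk : k ∈ ZmodNegSG ι) : ∃ z ∈ ZmodNegSG ι, z * z = k := by
  obtain ⟨S, hS, rfl⟩ := mem_ZmodNegSG_iff.mp hk
  obtain ⟨c, hc1, hc2⟩ := hS
  obtain ⟨d, hd⟩ := IsAlgClosed.exists_pow_nat_eq c (n := 2) (by norm_num)
  rw [pow_two] at hd
  have hd1 : ‖d‖ = 1 := by
    have h2 : ‖d‖ * ‖d‖ = 1 := by rw [← norm_mul, hd, hc1]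
    nlinarith [norm_nonneg d]
  refine ⟨QuotientGroup.mk (scalarU d hd1), mem_ZmodNegSG_iff.mpr ⟨_, ⟨d, hd1, rfl⟩, rfl⟩, ?_⟩
  rw [← QuotientGroup.mk_mul]
  congr 1
  apply Subtype.ext
  rw [Matrix.UnitaryGroup.mul_val]
  show (d • 1 : Matrix ι ι ℂ) * (d • 1) = (S : Matrix ι ι ℂ)
  rw [smul_mul_smul_comm, one_mul, hd, hc2]

lemma iIU_mem_scalarSG : iIU ι ∈ scalarSG ι := ⟨Complex.I, by simp, rfl⟩

lemma iIU_sq : iIU ι * iIU ι = negOneU ι := by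
  apply Subtype.ext
  rw [Matrix.UnitaryGroup.mul_val]
  show (Complex.I • 1 : Matrix ι ι ℂ) * (Complex.I • 1) = (-1 : Matrix ι ι ℂ)
  rw [smul_mul_smul_comm, one_mul, Complex.I_mul_I, neg_smul, one_smul]

lemma mk_negOneU_eq_one : (QuotientGroup.mk (negOneU ι) : UmodNeg ι) = 1 :=
  (QuotientGroup.eq_one_iff _).mpr negOneU_mem_negUSG

lemma mkiI_sq : (QuotientGroup.mk (iIU ι) : UmodNeg ι) * QuotientGroup.mk (iIU ι) = 1 := by
  rw [← QuotientGroup.mk_mul, iIU_sq]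
  exact mk_negOneU_eq_one

lemma mkiI_mem : (QuotientGroup.mk (iIU ι) : UmodNeg ι) ∈ ZmodNegSG ι :=
  mem_ZmodNegSG_iff.mpr ⟨_, iIU_mem_scalarSG, rfl⟩

lemma mkiI_inv : (QuotientGroup.mk (iIU ι) : UmodNeg ι)⁻¹ = QuotientGroup.mk (iIU ι) :=
  inv_eq_of_mul_eq_one_left mkiI_sq

lemma tauU_mkiI : tauU ι (QuotientGroup.mk (iIU ι)) = QuotientGroup.mk (iIU ι) := by
  rw [tauU_K mkiI_mem, mkiI_inv]

lemma K_order2 [Nonempty ι] {k : UmodNeg ι} (hk : k ∈ ZmodNegSG ι) (h2 : k * k = 1) :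
    k = 1 ∨ k = QuotientGroup.mk (iIU ι) := by
  obtain ⟨S, ⟨c, hc1, hc2⟩, rfl⟩ := mem_ZmodNegSG_iff.mp hk
  rw [← QuotientGroup.mk_mul, QuotientGroup.eq_one_iff] at h2
  have hSS : ((S * S : UG ι) : Matrix ι ι ℂ) = (c * c) • 1 := by
    rw [Matrix.UnitaryGroup.mul_val, hc2, smul_mul_smul_comm, one_mul]
  rcases mem_negUSG_iff.mp h2 with h | h
  · -- c * c = 1
    have hcc : c * c = 1 := by
      apply smul_one_inj (ι := ι)
      rw [← hSS, h, Matrix.UnitaryGroup.one_val, one_smul]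
    left
    rw [QuotientGroup.eq_one_iff]
    rcases mul_self_eq_one_iff.mp hcc with rfl | rfl
    · have : S = 1 := by apply Subtype.ext; rw [hc2, one_smul, Matrix.UnitaryGroup.one_val]
      rw [this]; exact one_mem _
    · have : S = negOneU ι := by
        apply Subtype.ext; rw [hc2]
        show _ = (-1 : Matrix ι ι ℂ)
        rw [neg_smul, one_smul]
      rw [this]; exact negOneU_mem_negUSG
  · -- c * c = -1
    have hcc : c * c = -1 := by
      apply smul_one_inj (ι := ι)
      rw [← hSS, h]
      show ((negOneU ι : UG ι) : Matrix ι ι ℂ) = _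
      show (-1 : Matrix ι ι ℂ) = _
      rw [neg_smul, one_smul]
    have hfac : (c - Complex.I) * (c + Complex.I) = 0 := by
      have : (c - Complex.I) * (c + Complex.I) = c * c - Complex.I * Complex.I := by ring
      rw [this, hcc, Complex.I_mul_I, sub_self]
    right
    rcases mul_eq_zero.mp hfac with h' | h'
    · have hcI : c = Complex.I := sub_eq_zero.mp h'
      have : S = iIU ι := by
        apply Subtype.ext; rw [hc2, hcI]; rfl
      rw [this]
    · have hcI : c = -Complex.I := eq_neg_of_add_eq_zero_left h'
      have : S = negOneU ι * iIU ι := by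
        apply Subtype.ext
        rw [hc2, hcI, Matrix.UnitaryGroup.mul_val]
        show _ = (-1 : Matrix ι ι ℂ) * (Complex.I • 1)
        rw [neg_smul, neg_one_mul]
      rw [this, QuotientGroup.mk_mul, mk_negOneU_eq_one, one_mul]

end
noncomputable section

open SemidirectProduct

variable {ι : Type} [Fintype ι] [DecidableEq ι]

lemma negUSG_central {e : UG ι} (he : e ∈ negUSG ι) (B : UG ι) : e * B = B * e :=
  scalar_central (negUSG_le_scalarSG ι he) B

/-- The key commutation lemma: two elements commuting (in `GtA`-sense) with a common
`τ`-type element have trivial commutator if it lies in the central `Z/⟨-I⟩`. -/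
lemma key_comm [Nonempty ι] {x y a : UmodNeg ι}
    (hx : a * tauU ι x = x * a) (hy : a * tauU ι y = y * a)
    (hc : x * y * x⁻¹ * y⁻¹ ∈ ZmodNegSG ι) : x * y = y * x := by
  obtain ⟨X, rfl⟩ := QuotientGroup.mk_surjective x
  obtain ⟨Y, rfl⟩ := QuotientGroup.mk_surjective y
  obtain ⟨A, rfl⟩ := QuotientGroup.mk_surjective a
  rw [tauU_mk, ← QuotientGroup.mk_mul, ← QuotientGroup.mk_mul, QuotientGroup.eq] at hx hy
  obtain ⟨e₁, he₁, hX⟩ : ∃ e ∈ negUSG ι, conjUGE X = A⁻¹ * (X * A) * e := by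
    refine ⟨((A * conjUGE X)⁻¹ * (X * A))⁻¹, inv_mem hx, ?_⟩
    group
  obtain ⟨e₂, he₂, hY⟩ : ∃ e ∈ negUSG ι, conjUGE Y = A⁻¹ * (Y * A) * e := by
    refine ⟨((A * conjUGE Y)⁻¹ * (Y * A))⁻¹, inv_mem hy, ?_⟩
    group
  obtain ⟨S, hS, hSc⟩ := mem_ZmodNegSG_iff.mp hc
  rw [← QuotientGroup.mk_inv, ← QuotientGroup.mk_inv, ← QuotientGroup.mk_mul,
    ← QuotientGroup.mk_mul, ← QuotientGroup.mk_mul, QuotientGroup.eq] at hSc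
  obtain ⟨e₃, he₃, hcomm⟩ : ∃ e ∈ negUSG ι, X * Y = S * e * (Y * X) := by
    refine ⟨S⁻¹ * (X * Y * X⁻¹ * Y⁻¹), hSc, ?_⟩
    group
  set S' : UG ι := S * e₃ with hS'def
  have hS'mem : S' ∈ scalarSG ι := mul_mem hS (negUSG_le_scalarSG ι he₃)
  obtain ⟨s, hs1, hs2⟩ := id hS'mem
  -- conjugate the relation X*Y = S' * (Y*X)
  have hconj : conjUGE X * conjUGE Y = conjUGE S' * (conjUGE Y * conjUGE X) := by
    rw [← _root_.map_mul, ← _root_.map_mul, ← _root_.map_mul, hcomm]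
  rw [hX, hY] at hconj
  -- move the central factors out
  have hXY : A⁻¹ * (X * A) * e₁ * (A⁻¹ * (Y * A) * e₂)
      = A⁻¹ * (X * Y) * A * (e₁ * e₂) := by
    calc A⁻¹ * (X * A) * e₁ * (A⁻¹ * (Y * A) * e₂)
        = A⁻¹ * (X * A) * (e₁ * (A⁻¹ * (Y * A) * e₂)) := by group
      _ = A⁻¹ * (X * A) * (A⁻¹ * (Y * A) * e₂ * e₁) := by
          rw [negUSG_central he₁ (A⁻¹ * (Y * A) * e₂)]
      _ = A⁻¹ * (X * Y) * A * (e₂ * e₁) := by group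
      _ = A⁻¹ * (X * Y) * A * (e₁ * e₂) := by rw [negUSG_central he₂ e₁]
  have hYX : A⁻¹ * (Y * A) * e₂ * (A⁻¹ * (X * A) * e₁)
      = A⁻¹ * (Y * X) * A * (e₁ * e₂) := by
    calc A⁻¹ * (Y * A) * e₂ * (A⁻¹ * (X * A) * e₁)
        = A⁻¹ * (Y * A) * (e₂ * (A⁻¹ * (X * A) * e₁)) := by group
      _ = A⁻¹ * (Y * A) * (A⁻¹ * (X * A) * e₁ * e₂) := by
          rw [negUSG_central he₂ (A⁻¹ * (X * A) * e₁)]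
      _ = A⁻¹ * (Y * X) * A * (e₁ * e₂) := by group
  rw [hXY, hYX] at hconj
  have hconj2 : A⁻¹ * (X * Y) * A = conjUGE S' * (A⁻¹ * (Y * X) * A) :=
    mul_right_cancel (by rw [hconj]; group)
  have hXY2 : X * Y = conjUGE S' * (Y * X) := by
    have := congrArg (fun w => A * w * A⁻¹) hconj2
    calc X * Y = A * (A⁻¹ * (X * Y) * A) * A⁻¹ := by group
      _ = A * (conjUGE S' * (A⁻¹ * (Y * X) * A)) * A⁻¹ := by rw [hconj2]
      _ = A * conjUGE S' * A⁻¹ * (Y * X) * (A * A⁻¹) := by group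
      _ = conjUGE S' * A * A⁻¹ * (Y * X) * (A * A⁻¹) := by
          rw [← scalar_central (conjUGE_mem_scalarSG hS'mem) A]
      _ = conjUGE S' * (Y * X) := by group
  -- compare the two scalar factors
  have hscal : conjUGE S' = S' := by
    have h1 : conjUGE S' * (Y * X) = S' * (Y * X) := by rw [← hXY2, hcomm, hS'def]
    exact mul_right_cancel h1
  have hsreal : (starRingEnd ℂ) s = s := by
    apply smul_one_inj (ι := ι)
    rw [← conjUGE_scalar_val hs2, hscal, hs2]
  have hspm : s = 1 ∨ s = -1 := by
    have him : s.im = 0 := by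
      have h := congrArg Complex.im hsreal
      have h2 : -s.im = s.im := by simpa using h
      linarith
    have hre : s.re = 1 ∨ s.re = -1 := by
      have : ‖s‖ = |s.re| := by
        rw [Complex.norm_def, Complex.normSq_apply, him]
        simp [Real.sqrt_mul_self_eq_abs]
      rw [this] at hs1
      rcases abs_cases s.re with ⟨h, -⟩ | ⟨h, -⟩
      · left; linarith
      · right; linarith
    rcases hre with h | h
    · left; exact Complex.ext h him
    · right; exact Complex.ext (by simpa using h) (by simpa using him)
  -- conclude
  have hmem : X * Y * (Y * X)⁻¹ ∈ negUSG ι := by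
    have : X * Y * (Y * X)⁻¹ = S' := by rw [hcomm, hS'def]; group
    rw [this]
    rcases hspm with h | h
    · have : S' = 1 := by
        apply Subtype.ext; rw [hs2, h, one_smul, Matrix.UnitaryGroup.one_val]
      rw [this]; exact one_mem _
    · have : S' = negOneU ι := by
        apply Subtype.ext; rw [hs2, h]
        show _ = (-1 : Matrix ι ι ℂ)
        rw [neg_smul, one_smul]
      rw [this]; exact negOneU_mem_negUSG
  rw [← QuotientGroup.mk_mul, ← QuotientGroup.mk_mul]
  symm
  rw [QuotientGroup.eq]
  have h := (negUSG_normal ι).conj_mem _ hmem (Y * X)⁻¹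
  have he : (Y * X)⁻¹ * (X * Y * (Y * X)⁻¹) * (Y * X)⁻¹⁻¹ = (Y * X)⁻¹ * (X * Y) := by group
  rwa [he] at h

end
noncomputable section

open SemidirectProduct

variable {ι : Type} [Fintype ι] [DecidableEq ι]

/-- The generator of `⟨τ⟩ ≅ ℤ/2ℤ`. -/
def gτ : Multiplicative (ZMod 2) := Multiplicative.ofAdd 1

lemma zmod2_cases (g : Multiplicative (ZMod 2)) : g = 1 ∨ g = gτ := by
  revert g; decide

lemma gτ_sq : gτ * gτ = 1 := by decide

lemma actU_gτ : actU ι gτ = tauU ι := by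
  show tauU ι ^ (Multiplicative.toAdd gτ).val = tauU ι
  have h : (Multiplicative.toAdd gτ).val = 1 := by decide
  rw [h, pow_one]

lemma actU_one : actU ι (1 : Multiplicative (ZMod 2)) = 1 := map_one _

lemma sd_eq_inl {N G : Type*} [Group N] [Group G] {φ : G →* MulAut N}
    {p : SemidirectProduct N G φ} (h : p.right = 1) : p = inl p.left := by
  ext <;> simp [h]

lemma mem_map_inl_iff {N G : Type*} [Group N] [Group G] {φ : G →* MulAut N}
    (K : Subgroup N) (x : SemidirectProduct N G φ) :
    x ∈ Subgroup.map (inl : N →* SemidirectProduct N G φ) K ↔ x.left ∈ K ∧ x.right = 1 := by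
  constructor
  · rintro ⟨k, hk, rfl⟩; exact ⟨hk, rfl⟩
  · rintro ⟨h1, h2⟩; exact ⟨x.left, h1, (sd_eq_inl h2).symm⟩

lemma mk_mul_inl (b x : UmodNeg ι) :
    (⟨b, gτ⟩ : GtA ι) * inl x = ⟨b * tauU ι x, gτ⟩ := by
  ext <;> simp [actU_gτ]

lemma inl_mul_mk (x b : UmodNeg ι) :
    inl x * (⟨b, gτ⟩ : GtA ι) = ⟨x * b, gτ⟩ := by
  ext <;> simp

lemma comm_mk_inl_iff (b x : UmodNeg ι) :
    (⟨b, gτ⟩ : GtA ι) * inl x = inl x * ⟨b, gτ⟩ ↔ b * tauU ι x = x * b := by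
  rw [mk_mul_inl, inl_mul_mk, SemidirectProduct.ext_iff]
  simp

lemma proj_mk (A : UG ι) :
    projUmodNeg ι (QuotientGroup.mk A) = QuotientGroup.mk A := rfl

lemma proj_surjective : Function.Surjective (projUmodNeg ι) := by
  intro q
  obtain ⟨A, rfl⟩ := QuotientGroup.mk_surjective q
  exact ⟨QuotientGroup.mk A, rfl⟩

lemma mem_ker_proj_iff {x : UmodNeg ι} : projUmodNeg ι x = 1 ↔ x ∈ ZmodNegSG ι := by
  obtain ⟨A, rfl⟩ := QuotientGroup.mk_surjective x
  rw [proj_mk, QuotientGroup.eq_one_iff]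
  constructor
  · intro h; exact mem_ZmodNegSG_iff.mpr ⟨A, h, rfl⟩
  · intro h
    obtain ⟨S, hS, hSA⟩ := mem_ZmodNegSG_iff.mp h
    rw [QuotientGroup.eq] at hSA
    have : A = S * (S⁻¹ * A) := by group
    rw [this]
    exact mul_mem hS (negUSG_le_scalarSG ι hSA)

lemma piT_left (p : GtA ι) : (piT ι p).left = projUmodNeg ι p.left := rfl

lemma piT_right (p : GtA ι) : (piT ι p).right = p.right := rfl

lemma ker_piT_eq : (piT ι).ker = Subgroup.map inl (ZmodNegSG ι) := by
  ext x
  rw [MonoidHom.mem_ker, mem_map_inl_iff, SemidirectProduct.ext_iff, piT_left, piT_right]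
  simp [mem_ker_proj_iff]

end
noncomputable section

open SemidirectProduct

variable {ι : Type} [Fintype ι] [DecidableEq ι]

lemma piT_inl (x : UmodNeg ι) : piT ι (inl x) = inl (projUmodNeg ι x) := rfl

end
end

set_option maxHeartbeats 2000000 in
/-- For an abelian subgroup `F` of `G = PU(n) ⋊ ⟨τ₀⟩` not contained in
`PU(n)`, there is an abelian subgroup `F'` of `G̃ = (U(n)/⟨-I⟩) ⋊ ⟨τ⟩` with `π'(F') = F` and
`F' ∩ (Z_n/⟨-I⟩) = ⟨[iI]⟩`; moreover `F'` is determined by `F` up to conjugation by an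
element of `Z_n/⟨-I⟩`.  (The kernel of `π'` is `Z_n/⟨-I⟩`.) -/
theorem twisted_lifting (n : ℕ) (hn : 1 ≤ n)
    (F : Subgroup (GA (Fin n)))
    (habel : ∀ x ∈ F, ∀ y ∈ F, x * y = y * x)
    (hout : ∃ u ∈ F, u.right ≠ 1) :
    (piT (Fin n)).ker
        = Subgroup.map SemidirectProduct.inl (ZmodNegSG (Fin n)) ∧
    ∃ F' : Subgroup (GtA (Fin n)),
      (∀ x ∈ F', ∀ y ∈ F', x * y = y * x) ∧
      Subgroup.map (piT (Fin n)) F' = F ∧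
      F' ⊓ Subgroup.map SemidirectProduct.inl (ZmodNegSG (Fin n))
        = Subgroup.zpowers
            (SemidirectProduct.inl (QuotientGroup.mk (iIU (Fin n)) : UmodNeg (Fin n))) ∧
      ∀ F'' : Subgroup (GtA (Fin n)),
        (∀ x ∈ F'', ∀ y ∈ F'', x * y = y * x) →
        Subgroup.map (piT (Fin n)) F'' = F →
        F'' ⊓ Subgroup.map SemidirectProduct.inl (ZmodNegSG (Fin n))
          = Subgroup.zpowers
              (SemidirectProduct.inl (QuotientGroup.mk (iIU (Fin n)) : UmodNeg (Fin n))) →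
        ∃ z ∈ Subgroup.map SemidirectProduct.inl (ZmodNegSG (Fin n)),
          Subgroup.map (MulAut.conj z).toMonoidHom F' = F'' := by

  haveI hne : Nonempty (Fin n) := ⟨⟨0, hn⟩⟩
  obtain ⟨u, huF, hur⟩ := hout
  have hug : u.right = gτ := (zmod2_cases u.right).resolve_left hur
  obtain ⟨a, ha⟩ := proj_surjective u.left
  set t : GtA (Fin n) := ⟨a, gτ⟩ with ht
  have htr : t.right = gτ := by rw [ht]
  have hpit : piT (Fin n) t = u := by
    apply SemidirectProduct.ext
    · rw [piT_left, ht]; exact ha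
    · rw [piT_right, htr, hug]
  set F' : Subgroup (GtA (Fin n)) :=
    F.comap (piT (Fin n)) ⊓ Subgroup.centralizer {t} with hF'
  have hmemF' : ∀ p : GtA (Fin n), p ∈ F' ↔ piT (Fin n) p ∈ F ∧ t * p = p * t := by
    intro p
    rw [hF', Subgroup.mem_inf, Subgroup.mem_comap, Subgroup.mem_centralizer_iff]
    simp
  have htF' : t ∈ F' := (hmemF' t).mpr ⟨by rw [hpit]; exact huF, rfl⟩
  have hcomm_inl : ∀ x : UmodNeg (Fin n),
      (t * SemidirectProduct.inl x = SemidirectProduct.inl x * t) ↔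
        a * tauU (Fin n) x = x * a := by
    intro x; rw [ht]; exact comm_mk_inl_iff a x
  -- pairwise commutation of the "PU-part" elements of F'
  have hC : ∀ p ∈ F', ∀ q ∈ F', p.right = 1 → q.right = 1 → Commute p q := by
    intro p hp q hq hp1 hq1
    obtain ⟨hpF, hpt⟩ := (hmemF' p).mp hp
    obtain ⟨hqF, hqt⟩ := (hmemF' q).mp hq
    obtain ⟨x, hpe⟩ : ∃ x, p = SemidirectProduct.inl x := ⟨p.left, sd_eq_inl hp1⟩
    obtain ⟨y, hqe⟩ : ∃ y, q = SemidirectProduct.inl y := ⟨q.left, sd_eq_inl hq1⟩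
    have hx : a * tauU (Fin n) x = x * a :=
      (hcomm_inl x).mp (by rw [← hpe]; exact hpt)
    have hy : a * tauU (Fin n) y = y * a :=
      (hcomm_inl y).mp (by rw [← hqe]; exact hqt)
    have hker : p * q * p⁻¹ * q⁻¹ ∈ (piT (Fin n)).ker := by
      rw [MonoidHom.mem_ker, _root_.map_mul, _root_.map_mul, _root_.map_mul,
        _root_.map_inv, _root_.map_inv, habel _ hpF _ hqF]
      group
    rw [ker_piT_eq] at hker
    have hcK : x * y * x⁻¹ * y⁻¹ ∈ ZmodNegSG (Fin n) := by
      have h1 : p * q * p⁻¹ * q⁻¹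
          = SemidirectProduct.inl (x * y * x⁻¹ * y⁻¹) := by
        rw [hpe, hqe, ← _root_.map_inv, ← _root_.map_inv, ← _root_.map_mul,
          ← _root_.map_mul, ← _root_.map_mul]
      rw [h1, mem_map_inl_iff] at hker
      exact hker.1
    have hxy := key_comm hx hy hcK
    show p * q = q * p
    rw [hpe, hqe, ← _root_.map_mul, ← _root_.map_mul, hxy]
  have hCt : ∀ p ∈ F', Commute p t := fun p hp => (((hmemF' p).mp hp).2).symm
  have hCt' : ∀ q ∈ F', Commute t q := fun q hq => ((hmemF' q).mp hq).2
  have hC1 : ∀ p ∈ F', p.right = 1 → ∀ q ∈ F', Commute p q := by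
    intro p hp hp1 q hq
    rcases zmod2_cases q.right with h | h
    · exact hC p hp q hq hp1 h
    · have hqt : q * t⁻¹ ∈ F' := mul_mem hq (inv_mem htF')
      have h1 : (q * t⁻¹).right = 1 := by
        rw [SemidirectProduct.mul_right, SemidirectProduct.inv_right, h, htr,
          mul_inv_cancel]
      have h2 := (hC p hp _ hqt hp1 h1).mul_right (hCt p hp)
      simpa using h2
  have habel' : ∀ p ∈ F', ∀ q ∈ F', p * q = q * p := by
    intro p hp q hq
    rcases zmod2_cases p.right with h | h
    · exact hC1 p hp h q hq
    · have hpt : p * t⁻¹ ∈ F' := mul_mem hp (inv_mem htF')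
      have h1 : (p * t⁻¹).right = 1 := by
        rw [SemidirectProduct.mul_right, SemidirectProduct.inv_right, h, htr,
          mul_inv_cancel]
      have h2 := (hC1 _ hpt h1 q hq).mul_left (hCt' q hq)
      exact (by simpa using h2 : Commute p q).eq
  -- lifting elements of F with trivial τ-component
  have hlift0 : ∀ f ∈ F, f.right = 1 →
      ∃ p, p ∈ F' ∧ piT (Fin n) p = f ∧ p.right = 1 := by
    intro f hf hf1
    obtain ⟨w, hw⟩ := proj_surjective f.left
    have hfe := sd_eq_inl hf1
    have hconj : ∀ v : UmodNeg (Fin n), t * SemidirectProduct.inl v * t⁻¹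
        = SemidirectProduct.inl (a * tauU (Fin n) v * a⁻¹) := by
      intro v
      have h2 : (SemidirectProduct.inl (actU (Fin n) gτ v) : GtA (Fin n))
          = SemidirectProduct.inr gτ * SemidirectProduct.inl v
            * SemidirectProduct.inr gτ⁻¹ := SemidirectProduct.inl_aut gτ v
      rw [actU_gτ, _root_.map_inv] at h2
      rw [ht, SemidirectProduct.mk_eq_inl_mul_inr]
      calc SemidirectProduct.inl a * SemidirectProduct.inr gτ * SemidirectProduct.inl v
            * (SemidirectProduct.inl a * SemidirectProduct.inr gτ)⁻¹
          = SemidirectProduct.inl a * (SemidirectProduct.inr gτ * SemidirectProduct.inl v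
            * (SemidirectProduct.inr gτ)⁻¹) * (SemidirectProduct.inl a)⁻¹ := by group
        _ = SemidirectProduct.inl a * SemidirectProduct.inl (tauU (Fin n) v)
            * (SemidirectProduct.inl a)⁻¹ := by rw [← h2]
        _ = SemidirectProduct.inl (a * tauU (Fin n) v * a⁻¹) := by
            rw [← _root_.map_inv, ← _root_.map_mul, ← _root_.map_mul]
    have hfw : piT (Fin n) (SemidirectProduct.inl w) = f := by
      rw [piT_inl, hw, ← hfe]
    have hdker : (SemidirectProduct.inl (a * tauU (Fin n) w * a⁻¹ * w⁻¹) : GtA (Fin n))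
        ∈ (piT (Fin n)).ker := by
      have h1 : (SemidirectProduct.inl (a * tauU (Fin n) w * a⁻¹ * w⁻¹) : GtA (Fin n))
          = (t * SemidirectProduct.inl w * t⁻¹) * (SemidirectProduct.inl w)⁻¹ := by
        rw [hconj w, ← _root_.map_inv, ← _root_.map_mul]
      rw [MonoidHom.mem_ker, h1, _root_.map_mul, _root_.map_mul, _root_.map_mul,
        _root_.map_inv, _root_.map_inv, hpit, hfw, habel u huF f hf]
      group
    rw [ker_piT_eq, mem_map_inl_iff] at hdker
    have hdK : a * tauU (Fin n) w * a⁻¹ * w⁻¹ ∈ ZmodNegSG (Fin n) := hdker.1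
    obtain ⟨z, hzK, hz2⟩ := K_sqrt hdK
    have hzc : ∀ q : UmodNeg (Fin n), z * q = q * z := K_central hzK
    have h3 : a * tauU (Fin n) w = (a * tauU (Fin n) w * a⁻¹ * w⁻¹) * (w * a) := by group
    have hgoal : a * tauU (Fin n) (w * z) = w * z * a := by
      have hz2c := K_central (mul_mem hzK hzK) (w * a)
      calc a * tauU (Fin n) (w * z) = a * (tauU (Fin n) w * z⁻¹) := by
            rw [_root_.map_mul, tauU_K hzK]
        _ = a * tauU (Fin n) w * z⁻¹ := by group
        _ = (a * tauU (Fin n) w * a⁻¹ * w⁻¹) * (w * a) * z⁻¹ := by rw [← h3]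
        _ = z * z * (w * a) * z⁻¹ := by rw [← hz2]
        _ = (w * a) * (z * z) * z⁻¹ := by rw [hz2c]
        _ = w * (a * z) := by group
        _ = w * (z * a) := by rw [← hzc a]
        _ = w * z * a := by group
    have hpi : piT (Fin n) (SemidirectProduct.inl (w * z)) = f := by
      rw [piT_inl, _root_.map_mul, hw, mem_ker_proj_iff.mpr hzK, mul_one, ← hfe]
    refine ⟨SemidirectProduct.inl (w * z), ?_, hpi, rfl⟩
    rw [hmemF']
    refine ⟨by rw [hpi]; exact hf, ?_⟩
    exact (hcomm_inl (w * z)).mpr hgoal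
  -- surjectivity of F' onto F
  have hmap : Subgroup.map (piT (Fin n)) F' = F := by
    apply le_antisymm
    · rintro _ ⟨p, hp, rfl⟩
      exact ((hmemF' p).mp hp).1
    · intro f hf
      rcases zmod2_cases f.right with h | h
      · obtain ⟨p, hp, hpi, -⟩ := hlift0 f hf h
        exact ⟨p, hp, hpi⟩
      · have hf1 : (f * u⁻¹).right = 1 := by
          rw [SemidirectProduct.mul_right, SemidirectProduct.inv_right, h, hug,
            mul_inv_cancel]
        obtain ⟨p, hp, hpi, -⟩ := hlift0 (f * u⁻¹) (mul_mem hf (inv_mem huF)) hf1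
        refine ⟨p * t, mul_mem hp htF', ?_⟩
        rw [_root_.map_mul, hpi, hpit]
        group
  -- intersection with the kernel
  have hint : F' ⊓ Subgroup.map SemidirectProduct.inl (ZmodNegSG (Fin n))
      = Subgroup.zpowers
          (SemidirectProduct.inl (QuotientGroup.mk (iIU (Fin n)) : UmodNeg (Fin n))) := by
    have hiimem : (SemidirectProduct.inl (QuotientGroup.mk (iIU (Fin n)) : UmodNeg (Fin n))
        : GtA (Fin n)) ∈ F' ⊓ Subgroup.map SemidirectProduct.inl (ZmodNegSG (Fin n)) := by
      rw [Subgroup.mem_inf]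
      constructor
      · rw [hmemF']
        constructor
        · rw [piT_inl, mem_ker_proj_iff.mpr mkiI_mem, _root_.map_one]
          exact one_mem F
        · refine (hcomm_inl _).mpr ?_
          rw [tauU_mkiI]
          exact (K_central mkiI_mem a).symm
      · exact ⟨_, mkiI_mem, rfl⟩
    apply le_antisymm
    · intro p hp
      rw [Subgroup.mem_inf] at hp
      obtain ⟨hp1, hp2⟩ := hp
      obtain ⟨k, hkK, rfl⟩ := hp2
      have hcm : a * tauU (Fin n) k = k * a :=
        (hcomm_inl k).mp ((hmemF' _).mp hp1).2
      rw [tauU_K hkK] at hcm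
      have h1 : k⁻¹ * a = k * a := by rw [K_central (inv_mem hkK) a, hcm]
      have h2 : k⁻¹ = k := mul_right_cancel h1
      have h3 : k * k = 1 := mul_eq_one_iff_eq_inv.mpr h2.symm
      rcases K_order2 hkK h3 with h | h
      · rw [h, _root_.map_one]; exact one_mem _
      · rw [h]; exact Subgroup.mem_zpowers _
    · exact Subgroup.zpowers_le.mpr hiimem
  refine ⟨ker_piT_eq, F', habel', hmap, hint, ?_⟩
  -- uniqueness up to conjugation by the kernel
  intro F'' habel'' hmap'' hint''
  have huF2 : u ∈ Subgroup.map (piT (Fin n)) F'' := by rw [hmap'']; exact huF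
  obtain ⟨t'', ht''F, ht''pi⟩ := huF2
  have ht''r : t''.right = gτ := by
    have h := congrArg SemidirectProduct.right ht''pi
    rw [piT_right] at h
    rw [h, hug]
  have hker2 : t'' * t⁻¹ ∈ (piT (Fin n)).ker := by
    rw [MonoidHom.mem_ker, _root_.map_mul, _root_.map_inv, ht''pi, hpit]
    group
  rw [ker_piT_eq, mem_map_inl_iff] at hker2
  obtain ⟨k, hkK, hke⟩ : ∃ k, k ∈ ZmodNegSG (Fin n) ∧
      t'' * t⁻¹ = SemidirectProduct.inl k :=
    ⟨(t'' * t⁻¹).left, hker2.1, sd_eq_inl hker2.2⟩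
  have ht''e : t'' = SemidirectProduct.inl k * t := by
    rw [← hke]; group
  obtain ⟨z, hzK, hz2⟩ := K_sqrt hkK
  have hzc : ∀ q : UmodNeg (Fin n), z * q = q * z := K_central hzK
  set Z : GtA (Fin n) := SemidirectProduct.inl z with hZ
  have hfix : ∀ x : UmodNeg (Fin n), Z * SemidirectProduct.inl x * Z⁻¹
      = SemidirectProduct.inl x := by
    intro x
    rw [hZ, ← _root_.map_inv, ← _root_.map_mul, ← _root_.map_mul]
    congr 1
    rw [hzc x]; group
  have hZt : Z * t * Z⁻¹ = t'' := by
    rw [hZ, ht, ht''e, ht, ← _root_.map_inv, inl_mul_mk, mk_mul_inl, inl_mul_mk]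
    congr 1
    rw [_root_.map_inv, tauU_K hzK, inv_inv, ← hz2, mul_assoc, ← hzc a, ← mul_assoc]
  -- elements of F'' with trivial τ-component commute with a in the twisted sense
  have hcomm'' : ∀ p ∈ F'', ∀ x : UmodNeg (Fin n), p = SemidirectProduct.inl x →
      a * tauU (Fin n) x = x * a := by
    intro p hp x hpx
    have hcw : t'' * p = p * t'' := habel'' t'' ht''F p hp
    rw [hpx, ht''e, ht, inl_mul_mk, mk_mul_inl, inl_mul_mk] at hcw
    have hcw2 : k * a * tauU (Fin n) x = x * (k * a) := by
      have h := congrArg SemidirectProduct.left hcw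
      simpa using h
    have h1 : k * (a * tauU (Fin n) x) = k * (x * a) := by
      calc k * (a * tauU (Fin n) x) = k * a * tauU (Fin n) x := by group
        _ = x * (k * a) := hcw2
        _ = (x * k) * a := by group
        _ = (k * x) * a := by rw [← K_central hkK x]
        _ = k * (x * a) := by group
    exact mul_left_cancel h1
  -- key step: inl x with the right properties lies in F''
  have hstar : ∀ x : UmodNeg (Fin n), piT (Fin n) (SemidirectProduct.inl x) ∈ F →
      a * tauU (Fin n) x = x * a → (SemidirectProduct.inl x : GtA (Fin n)) ∈ F'' := by
    intro x hxF hxa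
    have hx2 : piT (Fin n) (SemidirectProduct.inl x)
        ∈ Subgroup.map (piT (Fin n)) F'' := by rw [hmap'']; exact hxF
    obtain ⟨w'', hw''F, hw''pi⟩ := hx2
    have hw''r : w''.right = 1 := by
      have h := congrArg SemidirectProduct.right hw''pi
      rw [piT_right, piT_right, SemidirectProduct.right_inl] at h
      exact h
    obtain ⟨y, hw''e⟩ : ∃ y, w'' = SemidirectProduct.inl y := ⟨w''.left, sd_eq_inl hw''r⟩
    have hproj : projUmodNeg (Fin n) y = projUmodNeg (Fin n) x := by
      have h : piT (Fin n) (SemidirectProduct.inl y)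
          = piT (Fin n) (SemidirectProduct.inl x) := by rw [← hw''e, hw''pi]
      rw [piT_inl, piT_inl] at h
      exact SemidirectProduct.inl_injective h
    have hm : x * y⁻¹ ∈ ZmodNegSG (Fin n) := by
      refine mem_ker_proj_iff.mp ?_
      rw [_root_.map_mul, _root_.map_inv, hproj]
      group
    have hya : a * tauU (Fin n) y = y * a := hcomm'' w'' hw''F y hw''e
    have htm : tauU (Fin n) (x * y⁻¹) = x * y⁻¹ := by
      have htx : tauU (Fin n) x = a⁻¹ * (x * a) := by rw [← hxa]; group
      have hty : tauU (Fin n) y = a⁻¹ * (y * a) := by rw [← hya]; group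
      rw [_root_.map_mul, _root_.map_inv, htx, hty]
      have h1 : a⁻¹ * (x * a) * (a⁻¹ * (y * a))⁻¹
          = a⁻¹ * ((x * y⁻¹) * a) := by group
      rw [h1, K_central hm a]
      group
    have hm2 : x * y⁻¹ * (x * y⁻¹) = 1 := by
      have h := tauU_K hm
      rw [htm] at h
      exact mul_eq_one_iff_eq_inv.mpr h
    have hmF'' : (SemidirectProduct.inl (x * y⁻¹) : GtA (Fin n)) ∈ F'' := by
      have hz : (SemidirectProduct.inl (x * y⁻¹) : GtA (Fin n))
          ∈ Subgroup.zpowers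
            (SemidirectProduct.inl (QuotientGroup.mk (iIU (Fin n)) : UmodNeg (Fin n))) := by
        rcases K_order2 hm hm2 with h | h
        · rw [h, _root_.map_one]; exact one_mem _
        · rw [h]; exact Subgroup.mem_zpowers _
      rw [← hint'', Subgroup.mem_inf] at hz
      exact hz.1
    have hxe : (SemidirectProduct.inl x : GtA (Fin n))
        = SemidirectProduct.inl (x * y⁻¹) * w'' := by
      rw [hw''e, ← _root_.map_mul]
      congr 1
      group
    rw [hxe]
    exact mul_mem hmF'' hw''F
  refine ⟨Z, ⟨z, hzK, rfl⟩, ?_⟩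
  apply le_antisymm
  · rintro _ ⟨p, hpF', rfl⟩
    rcases zmod2_cases p.right with h | h
    · obtain ⟨x, hpe⟩ : ∃ x, p = SemidirectProduct.inl x := ⟨p.left, sd_eq_inl h⟩
      have hfp : (MulAut.conj Z).toMonoidHom p = p := by
        show Z * p * Z⁻¹ = p
        rw [hpe]; exact hfix x
      rw [hfp, hpe]
      exact hstar x (by rw [← hpe]; exact ((hmemF' p).mp hpF').1)
        ((hcomm_inl x).mp (by rw [← hpe]; exact ((hmemF' p).mp hpF').2))
    · have hq : p * t⁻¹ ∈ F' := mul_mem hpF' (inv_mem htF')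
      have hq1 : (p * t⁻¹).right = 1 := by
        rw [SemidirectProduct.mul_right, SemidirectProduct.inv_right, h, htr,
          mul_inv_cancel]
      obtain ⟨xq, hqe⟩ : ∃ x, p * t⁻¹ = SemidirectProduct.inl x :=
        ⟨(p * t⁻¹).left, sd_eq_inl hq1⟩
      have hqF'' : (p * t⁻¹ : GtA (Fin n)) ∈ F'' := by
        rw [hqe]
        exact hstar xq (by rw [← hqe]; exact ((hmemF' _).mp hq).1)
          ((hcomm_inl xq).mp (by rw [← hqe]; exact ((hmemF' _).mp hq).2))
      have hsplit : (MulAut.conj Z).toMonoidHom p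
          = (Z * (p * t⁻¹) * Z⁻¹) * (Z * t * Z⁻¹) := by
        show Z * p * Z⁻¹ = _
        group
      have hfq : Z * (p * t⁻¹) * Z⁻¹ = p * t⁻¹ := by rw [hqe]; exact hfix _
      rw [hsplit, hZt, hfq]
      exact mul_mem hqF'' ht''F
  · intro p hp''
    rcases zmod2_cases p.right with h | h
    · obtain ⟨x, hpe⟩ : ∃ x, p = SemidirectProduct.inl x := ⟨p.left, sd_eq_inl h⟩
      have hpF' : p ∈ F' := by
        rw [hmemF']
        constructor
        · have hx : piT (Fin n) p ∈ Subgroup.map (piT (Fin n)) F'' := ⟨p, hp'', rfl⟩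
          rwa [hmap''] at hx
        · rw [hpe]
          exact (hcomm_inl x).mpr (hcomm'' p hp'' x hpe)
      refine ⟨p, hpF', ?_⟩
      show Z * p * Z⁻¹ = p
      rw [hpe]; exact hfix _
    · have hq'' : p * t''⁻¹ ∈ F'' := mul_mem hp'' (inv_mem ht''F)
      have hq1 : (p * t''⁻¹).right = 1 := by
        rw [SemidirectProduct.mul_right, SemidirectProduct.inv_right, h, ht''r,
          mul_inv_cancel]
      obtain ⟨xq, hqe⟩ : ∃ x, p * t''⁻¹ = SemidirectProduct.inl x :=
        ⟨(p * t''⁻¹).left, sd_eq_inl hq1⟩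
      have hqF' : p * t''⁻¹ ∈ F' := by
        rw [hmemF']
        constructor
        · have hx : piT (Fin n) (p * t''⁻¹) ∈ Subgroup.map (piT (Fin n)) F''
            := ⟨p * t''⁻¹, hq'', rfl⟩
          rwa [hmap''] at hx
        · rw [hqe]
          exact (hcomm_inl xq).mpr (hcomm'' _ hq'' xq hqe)
      refine ⟨(p * t''⁻¹) * t, mul_mem hqF' htF', ?_⟩
      show Z * ((p * t''⁻¹) * t) * Z⁻¹ = p
      calc Z * ((p * t''⁻¹) * t) * Z⁻¹
          = (Z * (p * t''⁻¹) * Z⁻¹) * (Z * t * Z⁻¹) := by group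
        _ = (p * t''⁻¹) * t'' := by
            rw [hZt, hqe, hfix]
        _ = p := by group
end

section
/- Let k ≥ 1 and consider tuples (V, m, μ₁, μ₂) where V is a 2k-dimensional 𝔽₂-vector space, m is a nondegenerate alternating bilinear form on V, and μ₁, μ₂ are quadratic refinements of m such that both (V, m, μ₁) and (V, m, μ₂) are of plus type. Then there are exactly two isomorphism classes of such tuples: two tuples (V, m, μ₁, μ₂) and (V', m', μ₁', μ₂') are isomorphic if and only if (μ₁ = μ₂ ⟺ μ₁' = μ₂'); moreover tuples with μ₁ = μ₂ and tuples with μ₁ ≠ μ₂ both exist. -/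
noncomputable section

/-- `m` is a nondegenerate alternating bilinear form on the `𝔽₂`-vector space `V`. -/
def IsAltNondeg {V : Type} [AddCommGroup V] [Module (ZMod 2) V]
    (m : V → V → ZMod 2) : Prop :=
  (∀ x y z, m (x + y) z = m x z + m y z) ∧
  (∀ x y z, m x (y + z) = m x y + m x z) ∧
  (∀ x, m x x = 0) ∧
  (∀ x, (∀ y, m x y = 0) → x = 0)

/-- `μ` is a quadratic refinement of `m`: `m(x,y) = μ(x) + μ(y) + μ(x+y)`. -/
def IsQuadRef {V : Type} [AddCommGroup V] [Module (ZMod 2) V]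
    (m : V → V → ZMod 2) (μ : V → ZMod 2) : Prop :=
  ∀ x y, m x y = μ x + μ y + μ (x + y)

/-- `(V, m, μ)` is of plus type (the space `V_{0,k;0,0}`): there is a basis
`e₁, f₁, …, e_k, f_k` with `m(eᵢ,fⱼ) = δᵢⱼ`, `m(eᵢ,eⱼ) = m(fᵢ,fⱼ) = 0` and
`μ(eᵢ) = μ(fᵢ) = 0`. -/
def IsPlusType {V : Type} [AddCommGroup V] [Module (ZMod 2) V] (k : ℕ)
    (m : V → V → ZMod 2) (μ : V → ZMod 2) : Prop :=
  ∃ B : Module.Basis (Fin k ⊕ Fin k) (ZMod 2) V,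
    (∀ i j, m (B (Sum.inl i)) (B (Sum.inr j)) = if i = j then 1 else 0) ∧
    (∀ i j, m (B (Sum.inl i)) (B (Sum.inl j)) = 0) ∧
    (∀ i j, m (B (Sum.inr i)) (B (Sum.inr j)) = 0) ∧
    (∀ i, μ (B (Sum.inl i)) = 0) ∧ (∀ i, μ (B (Sum.inr i)) = 0)

/-- Isomorphism of tuples `(V, m, μ₁, …, μ_s)`: a linear isomorphism preserving the
bilinear form and matching the quadratic refinements up to a permutation. -/
def TupleIso {s : ℕ} {V V' : Type} [AddCommGroup V] [Module (ZMod 2) V]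
    [AddCommGroup V'] [Module (ZMod 2) V']
    (m : V → V → ZMod 2) (μs : Fin s → V → ZMod 2)
    (m' : V' → V' → ZMod 2) (μs' : Fin s → V' → ZMod 2) : Prop :=
  ∃ (f : V ≃ₗ[ZMod 2] V') (σ : Equiv.Perm (Fin s)),
    (∀ x y, m' (f x) (f y) = m x y) ∧ ∀ i x, μs' (σ i) (f x) = μs i x

namespace TC

open Finset

lemma z2cases (c : ZMod 2) : c = 0 ∨ c = 1 := by revert c; decide
lemma z2add_self (a : ZMod 2) : a + a = 0 := by revert a; decide
lemma z2eq_of_add_eq_zero {a b : ZMod 2} (h : a + b = 0) : a = b := by revert a b h; decide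
lemma h2z : (2 : ZMod 2) = 0 := by decide
lemma z2rearr {a b c d : ZMod 2} (h : a = b + c + d) : d = a + b + c := by revert a b c d; decide

section General
variable {V V' : Type} [AddCommGroup V] [Module (ZMod 2) V]
  [AddCommGroup V'] [Module (ZMod 2) V']

lemma additive_eq_zero {ι : Type} (B : Module.Basis ι (ZMod 2) V) {δ : V → ZMod 2}
    (hadd : ∀ x y, δ (x + y) = δ x + δ y) (hB : ∀ i, δ (B i) = 0) (x : V) : δ x = 0 := by
  let L : V →ₗ[ZMod 2] ZMod 2 := (AddMonoidHom.mk' δ hadd).toZModLinearMap 2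
  have : L = 0 := Module.Basis.ext B (by intro i; simpa [L] using hB i)
  have hx : L x = 0 := by rw [this]; rfl
  simpa [L] using hx

/-- Forms additive in each argument agreeing on a basis agree. -/
lemma form_eq_on_basis {ι : Type} (B : Module.Basis ι (ZMod 2) V) {m n : V → V → ZMod 2}
    (hm1 : ∀ x y z, m (x + y) z = m x z + m y z)
    (hm2 : ∀ x y z, m x (y + z) = m x y + m x z)
    (hn1 : ∀ x y z, n (x + y) z = n x z + n y z)
    (hn2 : ∀ x y z, n x (y + z) = n x y + n x z)
    (hB : ∀ i j, m (B i) (B j) = n (B i) (B j)) (x y : V) : m x y = n x y := by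
  have step1 : ∀ i y, m (B i) y = n (B i) y := by
    intro i y
    refine z2eq_of_add_eq_zero (additive_eq_zero B (δ := fun y => m (B i) y + n (B i) y)
      (fun a b => ?_) (fun j => ?_) y)
    · rw [hm2, hn2]; ring
    · rw [hB]; exact z2add_self _
  refine z2eq_of_add_eq_zero (additive_eq_zero B (δ := fun x => m x y + n x y)
    (fun a b => ?_) (fun i => ?_) x)
  · rw [hm1, hn1]; ring
  · rw [step1]; exact z2add_self _

/-- Quadratic refinements of the same form agreeing on a basis agree. -/
lemma quadref_eq_on_basis {ι : Type} (B : Module.Basis ι (ZMod 2) V) {m : V → V → ZMod 2}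
    {μ ν : V → ZMod 2} (hμ : IsQuadRef m μ) (hν : IsQuadRef m ν)
    (hB : ∀ i, μ (B i) = ν (B i)) (x : V) : μ x = ν x := by
  refine z2eq_of_add_eq_zero (additive_eq_zero B (δ := fun x => μ x + ν x)
    (fun a b => ?_) (fun i => ?_) x)
  · have h1 : μ (a+b) = m a b + μ a + μ b := z2rearr (hμ a b)
    have h2 : ν (a+b) = m a b + ν a + ν b := z2rearr (hν a b)
    rw [h1, h2]
    have := z2add_self (m a b); linear_combination this
  · rw [hB]; exact z2add_self _

lemma alt_symm {m : V → V → ZMod 2} (hm : IsAltNondeg m) (x y : V) : m x y = m y x := by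
  have h := hm.2.2.1 (x + y)
  rw [hm.1, hm.2.1, hm.2.1, hm.2.2.1, hm.2.2.1] at h
  refine z2eq_of_add_eq_zero ?_
  linear_combination h

lemma quadref_add_additive {m : V → V → ZMod 2} {μ ℓ : V → ZMod 2}
    (hμ : IsQuadRef m μ) (hℓ : ∀ x y, ℓ (x + y) = ℓ x + ℓ y) :
    IsQuadRef m (fun x => μ x + ℓ x) := by
  intro x y
  dsimp only
  rw [hℓ]
  linear_combination hμ x y + (-(ℓ x) - ℓ y) * h2z

end General
section Model
open Finset
variable (k : ℕ)

abbrev W (k : ℕ) := (Fin k ⊕ Fin k) → ZMod 2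

def m0 : W k → W k → ZMod 2 :=
  fun x y => ∑ i : Fin k, (x (.inl i) * y (.inr i) + x (.inr i) * y (.inl i))

def q0 : W k → ZMod 2 := fun x => ∑ i : Fin k, x (.inl i) * x (.inr i)

def stdB : Module.Basis (Fin k ⊕ Fin k) (ZMod 2) (W k) := Pi.basisFun _ _

variable {k}

lemma stdB_apply (j : Fin k ⊕ Fin k) : stdB k j = Pi.single j 1 := by
  simp [stdB]

lemma m0_add_left (x y z : W k) : m0 k (x + y) z = m0 k x z + m0 k y z := by
  simp only [m0, Pi.add_apply, ← Finset.sum_add_distrib]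
  exact Finset.sum_congr rfl fun i _ => by ring

lemma m0_add_right (x y z : W k) : m0 k x (y + z) = m0 k x y + m0 k x z := by
  simp only [m0, Pi.add_apply, ← Finset.sum_add_distrib]
  exact Finset.sum_congr rfl fun i _ => by ring

lemma m0_smul_left (c : ZMod 2) (x y : W k) : m0 k (c • x) y = c * m0 k x y := by
  simp only [m0, Pi.smul_apply, smul_eq_mul, Finset.mul_sum]
  exact Finset.sum_congr rfl fun i _ => by ring

lemma m0_symm (x y : W k) : m0 k x y = m0 k y x :=
  Finset.sum_congr rfl fun i _ => by ring

lemma m0_alt (x : W k) : m0 k x x = 0 := by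
  simp only [m0]
  rw [show (0 : ZMod 2) = ∑ _i : Fin k, 0 from by simp]
  exact Finset.sum_congr rfl fun i _ => by
    have := z2add_self (x (.inl i) * x (.inr i)); linear_combination this

lemma m0_single_inr (x : W k) (j : Fin k) : m0 k x (Pi.single (.inr j) 1) = x (.inl j) := by
  simp only [m0, Pi.single_apply]
  rw [Finset.sum_eq_single j]
  · simp
  · intro b _ hb; simp [hb]
  · simp

lemma m0_single_inl (x : W k) (j : Fin k) : m0 k x (Pi.single (.inl j) 1) = x (.inr j) := by
  simp only [m0, Pi.single_apply]
  rw [Finset.sum_eq_single j]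
  · simp
  · intro b _ hb; simp [hb]
  · simp

lemma m0_nondeg : IsAltNondeg (m0 k) := by
  refine ⟨m0_add_left, m0_add_right, m0_alt, fun x hx => ?_⟩
  funext j
  cases j with
  | inl j => have := hx (Pi.single (.inr j) 1); rw [m0_single_inr] at this; simpa using this
  | inr j => have := hx (Pi.single (.inl j) 1); rw [m0_single_inl] at this; simpa using this

lemma q0_quadref : IsQuadRef (m0 k) (q0 k) := by
  intro x y
  simp only [m0, q0, Pi.add_apply, ← Finset.sum_add_distrib]
  exact Finset.sum_congr rfl fun i _ => by
    have h2 : (2:ZMod 2) = 0 := by decide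
    linear_combination (-(x (Sum.inl i) * x (Sum.inr i)) - y (Sum.inr i) * y (Sum.inl i)) * h2

lemma q0_single (j : Fin k ⊕ Fin k) : q0 k (Pi.single j 1) = 0 := by
  cases j with
  | inl j => simp [q0, Pi.single_apply]
  | inr j => simp [q0, Pi.single_apply]

lemma m0_single_single (i j : Fin k ⊕ Fin k) :
    m0 k (Pi.single i (1:ZMod 2)) (Pi.single j 1) =
      (match i, j with
       | .inl a, .inr b => if a = b then 1 else 0
       | .inr a, .inl b => if a = b then 1 else 0
       | _, _ => 0) := by
  cases j with
  | inl j =>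
    rw [m0_single_inl]
    cases i with
    | inl i => simp [Pi.single_apply]
    | inr i => simp [Pi.single_apply, eq_comm]
  | inr j =>
    rw [m0_single_inr]
    cases i with
    | inl i => simp [Pi.single_apply, eq_comm]
    | inr i => simp [Pi.single_apply]

lemma q0_plustype : IsPlusType k (m0 k) (q0 k) := by
  refine ⟨stdB k, fun i j => ?_, fun i j => ?_, fun i j => ?_, fun i => ?_, fun i => ?_⟩ <;>
    · simp only [stdB_apply, m0_single_single, q0_single]

end Model
section Transvection
open Finset
variable {k : ℕ}

lemma m0_smul_right (c : ZMod 2) (x y : W k) : m0 k x (c • y) = c * m0 k x y := by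
  rw [m0_symm, m0_smul_left, m0_symm]

/-- The transvection `x ↦ x + m₀(x,u)·u` as a linear map. -/
def tvL (u : W k) : W k →ₗ[ZMod 2] W k where
  toFun x := x + m0 k x u • u
  map_add' x y := by
    simp only [m0_add_left, add_smul]; abel
  map_smul' c x := by
    simp only [m0_smul_left, RingHom.id_apply, smul_add, mul_smul, smul_eq_mul]

lemma tvL_apply (u x : W k) : tvL u x = x + m0 k x u • u := rfl

lemma tvL_invol (u x : W k) : tvL u (tvL u x) = x := by
  simp only [tvL_apply, m0_add_left, m0_smul_left, m0_alt, mul_zero, add_zero]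
  rw [add_assoc, ← add_smul]
  have : m0 k x u + m0 k x u = 0 := z2add_self _
  rw [this, zero_smul, add_zero]

/-- The transvection as a linear equivalence. -/
def tv (u : W k) : W k ≃ₗ[ZMod 2] W k :=
  LinearEquiv.ofLinear (tvL u) (tvL u)
    (LinearMap.ext fun x => tvL_invol u x) (LinearMap.ext fun x => tvL_invol u x)

lemma tv_apply (u x : W k) : tv u x = x + m0 k x u • u := rfl

lemma tv_symplectic (u x y : W k) : m0 k (tv u x) (tv u y) = m0 k x y := by
  rw [tv_apply, tv_apply, m0_add_left, m0_add_right, m0_add_right, m0_smul_right,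
    m0_smul_right, m0_smul_left, m0_smul_left, m0_alt, m0_symm u y]
  linear_combination (m0 k x u * m0 k y u) * h2z

lemma q0_add_smul (x u : W k) (c : ZMod 2) :
    q0 k (x + c • u) = q0 k x + c * q0 k u + c * m0 k x u := by
  rcases z2cases c with h | h <;> subst h
  · simp
  · rw [one_smul, one_mul, one_mul, z2rearr (q0_quadref (k := k) x u)]; ring

lemma tv_quad (u : W k) (hu : q0 k u = 1) (x : W k) : q0 k (tv u x) = q0 k x := by
  rw [tv_apply, q0_add_smul, hu, mul_one]
  rcases z2cases (m0 k x u) with h | h <;> rw [h]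
  · ring
  · linear_combination h2z

end Transvection
section Transitivity
open Finset
variable {k : ℕ}

lemma m0_zero_left (x : W k) : m0 k 0 x = 0 := by simp [m0]

lemma wadd_self (a : W k) : a + a = 0 := funext fun _ => z2add_self _

lemma exists_pair (a : W k) (ha : a ≠ 0) : ∃ z, m0 k a z = 1 := by
  by_contra h
  push_neg at h
  refine ha (m0_nondeg.2.2.2 a fun y => ?_)
  rcases z2cases (m0 k a y) with h' | h'
  · exact h'
  · exact absurd h' (h y)

lemma q0_add (x y : W k) : q0 k (x + y) = q0 k x + q0 k y + m0 k x y := by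
  have := q0_add_smul x y 1; simpa using this

/-- Joint transitivity of the orthogonal group on nonzero singular vectors. -/
lemma transitive_singular (a b : W k) (ha : a ≠ 0) (hb : b ≠ 0)
    (hqa : q0 k a = 0) (hqb : q0 k b = 0) :
    ∃ g : W k ≃ₗ[ZMod 2] W k, (∀ x y, m0 k (g x) (g y) = m0 k x y) ∧
      (∀ x, q0 k (g x) = q0 k x) ∧ g a = b := by
  -- first handle the case m0 a b = 1 via a single transvection
  have key : ∀ a b : W k, q0 k a = 0 → q0 k b = 0 → m0 k a b = 1 →
      ∃ g : W k ≃ₗ[ZMod 2] W k, (∀ x y, m0 k (g x) (g y) = m0 k x y) ∧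
        (∀ x, q0 k (g x) = q0 k x) ∧ g a = b := by
    intro a b hqa hqb hab
    have hu : q0 k (a + b) = 1 := by rw [q0_add, hqa, hqb, hab]; ring
    refine ⟨tv (a + b), tv_symplectic _, tv_quad _ hu, ?_⟩
    rw [tv_apply, m0_add_right, m0_alt, hab, zero_add, one_smul, ← add_assoc,
      wadd_self, zero_add]
  by_cases hab : b = a
  · exact ⟨LinearEquiv.refl _ _, by simp, by simp, hab.symm⟩
  rcases z2cases (m0 k a b) with h1 | h1
  swap
  · exact key a b hqa hqb h1
  -- now m0 a b = 0, b ≠ a; find z with m0 a z = 1, m0 b z = 1, q0 z = 0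
  obtain ⟨z₁, hz₁⟩ := exists_pair a ha
  obtain ⟨z₂, hz₂⟩ := exists_pair b hb
  have hz0 : ∃ z₀, m0 k a z₀ = 1 ∧ m0 k b z₀ = 1 := by
    rcases z2cases (m0 k b z₁) with h2 | h2
    · rcases z2cases (m0 k a z₂) with h3 | h3
      · refine ⟨z₁ + z₂, ?_, ?_⟩ <;> rw [m0_add_right]
        · rw [hz₁, h3]; ring
        · rw [hz₂, h2]; ring
      · exact ⟨z₂, h3, hz₂⟩
    · exact ⟨z₁, hz₁, h2⟩
  obtain ⟨z₀, hz₀a, hz₀b⟩ := hz0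
  have hba : m0 k b a = 0 := by rw [m0_symm]; exact h1
  have hz : ∃ z, m0 k a z = 1 ∧ m0 k b z = 1 ∧ q0 k z = 0 := by
    rcases z2cases (q0 k z₀) with h4 | h4
    · exact ⟨z₀, hz₀a, hz₀b, h4⟩
    · refine ⟨z₀ + a, ?_, ?_, ?_⟩
      · rw [m0_add_right, hz₀a, m0_alt]; ring
      · rw [m0_add_right, hz₀b, hba]; ring
      · rw [q0_add, h4, hqa, m0_symm, hz₀a]; linear_combination h2z
  obtain ⟨z, hza, hzb, hqz⟩ := hz
  have hzne : z ≠ a := fun h => by rw [h, m0_alt] at hza; exact one_ne_zero hza.symm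
  obtain ⟨g₁, hg₁m, hg₁q, hg₁⟩ := key a z hqa hqz hza
  obtain ⟨g₂, hg₂m, hg₂q, hg₂⟩ := key z b hqz hqb (by rw [m0_symm]; exact hzb)
  refine ⟨g₁.trans g₂, fun x y => ?_, fun x => ?_, ?_⟩
  · simp only [LinearEquiv.trans_apply, hg₂m, hg₁m]
  · simp only [LinearEquiv.trans_apply, hg₂q, hg₁q]
  · simp only [LinearEquiv.trans_apply, hg₁, hg₂]

end Transitivity
section Characters
open Finset
variable {k : ℕ}

def χ : ZMod 2 → ℤ := fun c => if c = 0 then 1 else -1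

lemma χ_add (a b : ZMod 2) : χ (a + b) = χ a * χ b := by revert a b; decide

lemma χ_ne_zero (a : ZMod 2) : χ a ≠ 0 := by revert a; decide

lemma χ_sum {ι : Type} (s : Finset ι) (f : ι → ZMod 2) :
    χ (∑ i ∈ s, f i) = ∏ i ∈ s, χ (f i) := by
  induction s using Finset.cons_induction with
  | empty => simp [χ]
  | cons i s hi ih => rw [Finset.sum_cons, Finset.prod_cons, χ_add, ih]

def S (μ : W k → ZMod 2) : ℤ := ∑ x : W k, χ (μ x)

def pairEquiv (k : ℕ) : (Fin k → ZMod 2 × ZMod 2) ≃ W k where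
  toFun p := Sum.elim (fun i => (p i).1) (fun i => (p i).2)
  invFun x i := (x (.inl i), x (.inr i))
  left_inv p := by funext i; simp
  right_inv x := by funext j; cases j <;> simp

lemma S_q0 : S (q0 k) = 2 ^ k := by
  set e := pairEquiv k with he
  have h1 : ∀ p : Fin k → ZMod 2 × ZMod 2,
      χ (q0 k (e p)) = ∏ i : Fin k, χ ((p i).1 * (p i).2) := by
    intro p
    rw [q0, χ_sum]
    exact Finset.prod_congr rfl fun i _ => by simp [he, pairEquiv]
  have h2 : (∑ c : ZMod 2 × ZMod 2, χ (c.1 * c.2)) = 2 := by decide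
  calc S (q0 k) = ∑ p : Fin k → ZMod 2 × ZMod 2, χ (q0 k (e p)) :=
        (Equiv.sum_comp e (fun x => χ (q0 k x))).symm
    _ = ∑ p : Fin k → ZMod 2 × ZMod 2, ∏ i : Fin k, χ ((p i).1 * (p i).2) :=
        Finset.sum_congr rfl fun p _ => h1 p
    _ = ∏ _i : Fin k, ∑ c : ZMod 2 × ZMod 2, χ (c.1 * c.2) :=
        (Fintype.prod_sum (κ := fun _ : Fin k => ZMod 2 × ZMod 2)
          (fun _ c => χ (c.1 * c.2))).symm
    _ = 2 ^ k := by rw [Finset.prod_congr rfl fun i _ => h2, Finset.prod_const]; simp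

lemma S_plus {μ : W k → ZMod 2} (hq : IsQuadRef (m0 k) μ) (hp : IsPlusType k (m0 k) μ) :
    S μ = S (q0 k) := by
  obtain ⟨C, hC1, hC2, hC3, hC4, hC5⟩ := hp
  set F : W k ≃ₗ[ZMod 2] W k := C.equivFun.symm with hF
  have hFstd : ∀ j : Fin k ⊕ Fin k, F (Pi.single j 1) = C j := by
    intro j
    rw [hF, Module.Basis.equivFun_symm_apply, Finset.sum_eq_single j]
    · simp
    · intro b _ hb; simp [Pi.single_apply, hb]
    · simp
  have hn : ∀ x y, m0 k (F x) (F y) = m0 k x y := by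
    refine form_eq_on_basis (stdB k) ?_ ?_ m0_add_left m0_add_right ?_
    · intro x y z; rw [map_add, m0_add_left]
    · intro x y z; rw [map_add, m0_add_right]
    · intro i j
      rw [stdB_apply, stdB_apply, hFstd, hFstd, m0_single_single]
      cases i with
      | inl a => cases j with
        | inl b => exact hC2 a b
        | inr b => exact hC1 a b
      | inr a => cases j with
        | inl b => rw [m0_symm, hC1 b a]; simp [eq_comm]
        | inr b => exact hC3 a b
  have hqF : IsQuadRef (m0 k) (fun x => μ (F x)) := by
    intro x y
    dsimp only
    rw [← hn x y, map_add]
    exact hq (F x) (F y)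
  have hμF : ∀ x, μ (F x) = q0 k x := by
    refine quadref_eq_on_basis (stdB k) hqF q0_quadref fun j => ?_
    rw [stdB_apply, hFstd, q0_single]
    cases j with
    | inl i => exact hC4 i
    | inr i => exact hC5 i
  rw [S, ← Equiv.sum_comp F.toEquiv (fun x => χ (μ x))]
  simp only [LinearEquiv.coe_toEquiv]
  rw [Finset.sum_congr rfl fun x _ => by rw [hμF x]]
  rfl

/-- If `μ = q0 + m0 v ·` is of plus type then `q0 v = 0`. -/
lemma qv_zero {v : W k} (hp : IsPlusType k (m0 k) (fun x => q0 k x + m0 k v x)) :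
    q0 k v = 0 := by
  set μ : W k → ZMod 2 := fun x => q0 k x + m0 k v x with hμdef
  have hqμ : IsQuadRef (m0 k) μ :=
    quadref_add_additive q0_quadref (fun x y => m0_add_right v x y)
  have h1 : S μ = S (q0 k) := S_plus hqμ hp
  have h2 : S μ = χ (q0 k v) * S (q0 k) := by
    rw [S, ← Equiv.sum_comp (Equiv.addRight v) (fun x => χ (μ x))]
    have : ∀ x : W k, μ (x + v) = q0 k x + q0 k v := by
      intro x
      simp only [hμdef, m0_add_right, m0_alt, q0_add]
      rw [m0_symm x v]
      linear_combination (m0 k v x) * h2z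
    simp only [Equiv.coe_addRight, this]
    rw [S, Finset.mul_sum]
    exact Finset.sum_congr rfl fun x _ => by rw [add_comm, χ_add]
  rcases z2cases (q0 k v) with h | h
  · exact h
  · exfalso
    rw [h] at h2
    rw [h2, S_q0] at h1
    have : χ (1 : ZMod 2) = -1 := by decide
    rw [this] at h1
    have h2k : (2:ℤ) ^ k ≠ 0 := pow_ne_zero _ (by norm_num)
    omega

end Characters
section ModelMain
open Finset
variable {k : ℕ}

def iz (hk : 0 < k) : Fin k := ⟨0, hk⟩
def eZ (hk : 0 < k) : W k := Pi.single (.inl (iz hk)) 1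
def fZ (hk : 0 < k) : W k := Pi.single (.inr (iz hk)) 1
/-- The canonical second refinement. -/
def nu0 (hk : 0 < k) : W k → ZMod 2 := fun x => q0 k x + m0 k (eZ hk) x

lemma m0_eZ (hk : 0 < k) (x : W k) : m0 k (eZ hk) x = x (.inr (iz hk)) := by
  rw [m0_symm, eZ, m0_single_inl]

lemma m0_eZ' (hk : 0 < k) (x : W k) : m0 k x (eZ hk) = x (.inr (iz hk)) := by
  rw [eZ, m0_single_inl]

lemma nu0_apply (hk : 0 < k) (x : W k) : nu0 hk x = q0 k x + m0 k (eZ hk) x := rfl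

lemma nu0_quadref (hk : 0 < k) : IsQuadRef (m0 k) (nu0 hk) :=
  quadref_add_additive q0_quadref (fun x y => m0_add_right _ x y)

lemma nu0_plustype (hk : 0 < k) : IsPlusType k (m0 k) (nu0 hk) := by
  refine ⟨(stdB k).map (tv (eZ hk)), ?_, ?_, ?_, ?_, ?_⟩
  · intro i j
    simp only [Module.Basis.map_apply]
    rw [tv_symplectic, stdB_apply, stdB_apply, m0_single_single]
  · intro i j
    simp only [Module.Basis.map_apply]
    rw [tv_symplectic, stdB_apply, stdB_apply, m0_single_single]
  · intro i j
    simp only [Module.Basis.map_apply]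
    rw [tv_symplectic, stdB_apply, stdB_apply, m0_single_single]
  · intro i
    simp only [Module.Basis.map_apply, stdB_apply, tv_apply]
    rw [m0_eZ']
    simp only [Pi.single_apply, reduceCtorEq, if_false, zero_smul, add_zero]
    rw [nu0, q0_single, m0_eZ]
    simp [Pi.single_apply]
  · intro i
    simp only [Module.Basis.map_apply, stdB_apply, tv_apply]
    rw [m0_eZ']
    by_cases hi : i = iz hk
    · subst hi
      rw [Pi.single_eq_same, one_smul, nu0, q0_add, q0_single, eZ, q0_single, m0_single_single,
        m0_add_right, m0_single_single, m0_single_single]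
      simp only [if_pos rfl]
      decide
    · rw [Pi.single_eq_of_ne (fun h => hi (Sum.inr_injective h).symm), zero_smul, add_zero,
        nu0, q0_single, m0_eZ]
      simp [Pi.single_apply, hi]

lemma nu0_ne_q0 (hk : 0 < k) : nu0 hk ≠ q0 k := by
  intro h
  have := congrFun h (fZ hk)
  rw [nu0, m0_eZ, fZ, q0_single] at this
  simp [Pi.single_apply] at this

/-- Every quadratic refinement of `m0` differs from `q0` by `m0 v ·`. -/
lemma delta_rep {ν : W k → ZMod 2} (hν : IsQuadRef (m0 k) ν) :
    ∃ v : W k, ∀ x, ν x = q0 k x + m0 k v x := by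
  set δ : W k → ZMod 2 := fun x => ν x + q0 k x with hδ
  have hadd : ∀ x y, δ (x + y) = δ x + δ y := by
    intro x y
    simp only [hδ]
    rw [z2rearr (hν x y), z2rearr (q0_quadref (k := k) x y)]
    linear_combination (m0 k x y) * h2z
  set v : W k := Sum.elim (fun i => δ (Pi.single (.inr i) 1)) (fun i => δ (Pi.single (.inl i) 1))
    with hvdef
  have hv : ∀ x, m0 k v x = δ x := by
    intro x
    refine z2eq_of_add_eq_zero (additive_eq_zero (stdB k)
      (δ := fun x => m0 k v x + δ x) (fun a b => ?_) (fun j => ?_) x)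
    · rw [m0_add_right, hadd]; ring
    · rw [stdB_apply]
      cases j with
      | inl i =>
        rw [m0_single_inl]
        rw [show v (Sum.inr i) = δ (Pi.single (.inl i) 1) from rfl]
        exact z2add_self _
      | inr i =>
        rw [m0_single_inr]
        rw [show v (Sum.inl i) = δ (Pi.single (.inr i) 1) from rfl]
        exact z2add_self _
  refine ⟨v, fun x => ?_⟩
  have := hv x
  rw [hδ] at this
  linear_combination (-1 : ZMod 2) * this + (-(q0 k x)) * h2z

end ModelMain
section Assembly
open Finset
variable {k : ℕ}

/-- TupleIso is symmetric. -/
lemma tupleIso_symm {s : ℕ} {V V' : Type} [AddCommGroup V] [Module (ZMod 2) V]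
    [AddCommGroup V'] [Module (ZMod 2) V']
    {m : V → V → ZMod 2} {μs : Fin s → V → ZMod 2}
    {m' : V' → V' → ZMod 2} {μs' : Fin s → V' → ZMod 2}
    (h : TupleIso m μs m' μs') : TupleIso m' μs' m μs := by
  obtain ⟨f, σ, hm, hμ⟩ := h
  refine ⟨f.symm, σ.symm, fun x y => ?_, fun i x => ?_⟩
  · rw [← hm (f.symm x) (f.symm y), f.apply_symm_apply, f.apply_symm_apply]
  · have := hμ (σ.symm i) (f.symm x)
    rw [σ.apply_symm_apply, f.apply_symm_apply] at this
    exact this.symm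

/-- TupleIso is transitive. -/
lemma tupleIso_trans {s : ℕ} {V V' V'' : Type} [AddCommGroup V] [Module (ZMod 2) V]
    [AddCommGroup V'] [Module (ZMod 2) V'] [AddCommGroup V''] [Module (ZMod 2) V'']
    {m : V → V → ZMod 2} {μs : Fin s → V → ZMod 2}
    {m' : V' → V' → ZMod 2} {μs' : Fin s → V' → ZMod 2}
    {m'' : V'' → V'' → ZMod 2} {μs'' : Fin s → V'' → ZMod 2}
    (h1 : TupleIso m μs m' μs') (h2 : TupleIso m' μs' m'' μs'') :
    TupleIso m μs m'' μs'' := by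
  obtain ⟨f, σ, hm, hμ⟩ := h1
  obtain ⟨g, τ, hm', hμ'⟩ := h2
  refine ⟨f.trans g, σ.trans τ, fun x y => ?_, fun i x => ?_⟩
  · simp only [LinearEquiv.trans_apply]; rw [hm', hm]
  · simp only [LinearEquiv.trans_apply, Equiv.trans_apply]
    rw [hμ' (σ i) (f x), hμ i x]

/-- The key model classification: any plus-type refinement `ν ≠ q0` gives a tuple
isomorphic to the canonical one. -/
lemma model_caseB (hk : 0 < k) {ν : W k → ZMod 2} (hqν : IsQuadRef (m0 k) ν)
    (hpν : IsPlusType k (m0 k) ν) (hne : ν ≠ q0 k) :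
    TupleIso (m0 k) ![q0 k, ν] (m0 k) ![q0 k, nu0 hk] := by
  obtain ⟨v, hv⟩ := delta_rep hqν
  have hνeq : ν = fun x => q0 k x + m0 k v x := funext hv
  have hv0 : v ≠ 0 := by
    intro h
    refine hne (funext fun x => ?_)
    rw [hv x, h, m0_zero_left, add_zero]
  have hplus' : IsPlusType k (m0 k) (fun x => q0 k x + m0 k v x) := hνeq ▸ hpν
  have hqv : q0 k v = 0 := qv_zero hplus'
  have heZ0 : eZ hk ≠ 0 := by
    intro h
    have := congrFun h (Sum.inl (iz hk))
    rw [eZ, Pi.single_eq_same] at this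
    exact one_ne_zero this
  obtain ⟨g, hgm, hgq, hge⟩ := transitive_singular (eZ hk) v heZ0 hv0 (q0_single _) hqv
  refine ⟨g.symm, Equiv.refl _, fun x y => ?_, fun i x => ?_⟩
  · have := hgm (g.symm x) (g.symm y)
    rw [g.apply_symm_apply, g.apply_symm_apply] at this
    exact this.symm
  · simp only [Equiv.refl_apply]
    fin_cases i
    · show q0 k (g.symm x) = q0 k x
      have := hgq (g.symm x)
      rw [g.apply_symm_apply] at this
      exact this.symm
    · show nu0 hk (g.symm x) = ν x
      rw [nu0_apply, hv x]
      have h1 : m0 k (eZ hk) (g.symm x) = m0 k v x := by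
        have := hgm (eZ hk) (g.symm x)
        rw [hge, g.apply_symm_apply] at this
        exact this.symm
      have h2 : q0 k (g.symm x) = q0 k x := by
        have := hgq (g.symm x)
        rw [g.apply_symm_apply] at this
        exact this.symm
      rw [h1, h2]

/-- Reduction of an abstract tuple to the model. -/
lemma to_model {V : Type} [AddCommGroup V] [Module (ZMod 2) V]
    {m : V → V → ZMod 2} {μ₁ μ₂ : V → ZMod 2}
    (hm : IsAltNondeg m) (h1 : IsQuadRef m μ₁) (h2 : IsQuadRef m μ₂)
    (hp1 : IsPlusType k m μ₁) (hp2 : IsPlusType k m μ₂) :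
    ∃ ν : W k → ZMod 2, IsQuadRef (m0 k) ν ∧ IsPlusType k (m0 k) ν ∧
      TupleIso m ![μ₁, μ₂] (m0 k) ![q0 k, ν] ∧ (μ₁ = μ₂ → ν = q0 k) ∧
      (μ₁ ≠ μ₂ → ν ≠ q0 k) := by
  obtain ⟨B, hB1, hB2, hB3, hB4, hB5⟩ := hp1
  set f : V ≃ₗ[ZMod 2] W k := B.equivFun with hfdef
  have hfB : ∀ j, f (B j) = Pi.single j 1 := by
    intro j
    funext l
    rw [hfdef, Module.Basis.equivFun_self, Pi.single_apply]
    simp [eq_comm]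
  have hfm : ∀ x y, m0 k (f x) (f y) = m x y := by
    refine form_eq_on_basis B ?_ ?_ hm.1 hm.2.1 ?_
    · intro x y z; rw [map_add, m0_add_left]
    · intro x y z; rw [map_add, m0_add_right]
    · intro i j
      rw [hfB, hfB, m0_single_single]
      cases i with
      | inl a => cases j with
        | inl b => exact (hB2 a b).symm
        | inr b => exact (hB1 a b).symm
      | inr a => cases j with
        | inl b =>
          rw [alt_symm hm (B (Sum.inr a)) (B (Sum.inl b)), hB1 b a]; simp [eq_comm]
        | inr b => exact (hB3 a b).symm
  have hq1 : ∀ x, q0 k (f x) = μ₁ x := by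
    have hquad : IsQuadRef m (fun x => q0 k (f x)) := by
      intro x y
      dsimp only
      rw [← hfm x y, map_add]
      exact q0_quadref (f x) (f y)
    refine quadref_eq_on_basis B hquad h1 fun j => ?_
    rw [hfB, q0_single]
    cases j with
    | inl i => exact (hB4 i).symm
    | inr i => exact (hB5 i).symm
  set ν : W k → ZMod 2 := fun w => μ₂ (f.symm w) with hνdef
  have hmν : IsQuadRef (m0 k) ν := by
    intro x y
    simp only [hνdef]
    rw [map_add, ← h2 (f.symm x) (f.symm y), ← hfm (f.symm x) (f.symm y),
      f.apply_symm_apply, f.apply_symm_apply]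
  have hpν : IsPlusType k (m0 k) ν := by
    obtain ⟨C, hC1, hC2, hC3, hC4, hC5⟩ := hp2
    refine ⟨C.map f, ?_, ?_, ?_, ?_, ?_⟩ <;>
      simp only [Module.Basis.map_apply, hνdef, hfm, f.symm_apply_apply]
    exacts [hC1, hC2, hC3, hC4, hC5]
  refine ⟨ν, hmν, hpν, ⟨f, Equiv.refl _, hfm, fun i x => ?_⟩, fun h => ?_, fun h hc => ?_⟩
  · simp only [Equiv.refl_apply]
    fin_cases i
    · show q0 k (f x) = μ₁ x
      exact hq1 x
    · show ν (f x) = μ₂ x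
      exact congrArg μ₂ (f.symm_apply_apply x)
  · funext x
    rw [hνdef]
    dsimp only
    rw [← h, ← hq1 (f.symm x), f.apply_symm_apply]
  · refine h (funext fun x => ?_)
    have : ν (f x) = q0 k (f x) := by rw [hc]
    rw [hνdef] at this
    dsimp only at this
    rw [f.symm_apply_apply, hq1 x] at this
    exact this.symm

end Assembly
section Final
open Finset

lemma iso_eq_dir {V V' : Type} [AddCommGroup V] [Module (ZMod 2) V]
    [AddCommGroup V'] [Module (ZMod 2) V']
    {m : V → V → ZMod 2} {μ₁ μ₂ : V → ZMod 2}
    {m' : V' → V' → ZMod 2} {μ₁' μ₂' : V' → ZMod 2}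
    (h : TupleIso m ![μ₁, μ₂] m' ![μ₁', μ₂']) (h12 : μ₁ = μ₂) : μ₁' = μ₂' := by
  obtain ⟨f, σ, hm, hμ⟩ := h
  have key : ∀ i x, ![μ₁', μ₂'] (σ i) x = ![μ₁, μ₂] i (f.symm x) := by
    intro i x
    have := hμ i (f.symm x)
    rwa [f.apply_symm_apply] at this
  have e : ∀ x, ![μ₁', μ₂'] (σ 0) x = ![μ₁', μ₂'] (σ 1) x := by
    intro x
    rw [key 0 x, key 1 x]
    show μ₁ _ = μ₂ _
    rw [h12]
  have f2 : ∀ i : Fin 2, i = 0 ∨ i = 1 := by decide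
  have hne : σ 0 ≠ σ 1 := fun hc => absurd (σ.injective hc) (by decide)
  funext x
  rcases f2 (σ 0) with h0 | h0 <;> rcases f2 (σ 1) with h1 | h1
  · exact absurd (h0.trans h1.symm) hne
  · have := e x; rw [h0, h1] at this; simpa using this
  · have := e x; rw [h0, h1] at this; simpa using this.symm
  · exact absurd (h0.trans h1.symm) hne

def modelToStd (k : ℕ) : W k ≃ₗ[ZMod 2] (Fin (2 * k) → ZMod 2) :=
  LinearEquiv.funCongrLeft (ZMod 2) (ZMod 2) ((finCongr (two_mul k)).trans finSumFinEquiv.symm)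

lemma transfer {k : ℕ} {V' : Type} [AddCommGroup V'] [Module (ZMod 2) V']
    (L : W k ≃ₗ[ZMod 2] V') {μ : W k → ZMod 2}
    (hq : IsQuadRef (m0 k) μ) (hp : IsPlusType k (m0 k) μ) :
    IsAltNondeg (fun x y => m0 k (L.symm x) (L.symm y)) ∧
    IsQuadRef (fun x y => m0 k (L.symm x) (L.symm y)) (fun x => μ (L.symm x)) ∧
    IsPlusType k (fun x y => m0 k (L.symm x) (L.symm y)) (fun x => μ (L.symm x)) := by
  refine ⟨⟨fun x y z => ?_, fun x y z => ?_, fun x => ?_, fun x hx => ?_⟩, fun x y => ?_, ?_⟩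
  · simp only [map_add, m0_add_left]
  · simp only [map_add, m0_add_right]
  · exact m0_alt _
  · have h0 : L.symm x = 0 := m0_nondeg.2.2.2 _ (fun y => by simpa using hx (L y))
    have := congrArg L h0
    rwa [L.apply_symm_apply, map_zero] at this
  · simp only [map_add]; exact hq _ _
  · obtain ⟨C, hC1, hC2, hC3, hC4, hC5⟩ := hp
    refine ⟨C.map L, ?_, ?_, ?_, ?_, ?_⟩ <;>
      simp only [Module.Basis.map_apply, L.symm_apply_apply]
    exacts [hC1, hC2, hC3, hC4, hC5]

lemma nu0_fZ {k : ℕ} (hk : 0 < k) : nu0 hk (fZ hk) = 1 := by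
  rw [nu0_apply, m0_eZ, fZ, q0_single, Pi.single_eq_same, zero_add]

lemma q0_fZ {k : ℕ} (hk : 0 < k) : q0 k (fZ hk) = 0 := by
  rw [fZ]; exact q0_single _

end Final

end TC

/-- For `k ≥ 1` there are exactly two isomorphism classes of tuples
`(V, m, μ₁, μ₂)` with `V` of dimension `2k` over `𝔽₂`, `m` nondegenerate alternating, and
`μ₁, μ₂` quadratic refinements of plus type: two such tuples are isomorphic iff
(`μ₁ = μ₂ ⟺ μ₁' = μ₂'`), and both kinds exist. -/
theorem two_classes_of_pairs (k : ℕ) (hk : 1 ≤ k) :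
    (∀ (V V' : Type) [AddCommGroup V] [Module (ZMod 2) V]
        [AddCommGroup V'] [Module (ZMod 2) V']
        (m : V → V → ZMod 2) (μ₁ μ₂ : V → ZMod 2)
        (m' : V' → V' → ZMod 2) (μ₁' μ₂' : V' → ZMod 2),
      Module.finrank (ZMod 2) V = 2 * k → Module.finrank (ZMod 2) V' = 2 * k →
      IsAltNondeg m → IsQuadRef m μ₁ → IsQuadRef m μ₂ →
      IsPlusType k m μ₁ → IsPlusType k m μ₂ →
      IsAltNondeg m' → IsQuadRef m' μ₁' → IsQuadRef m' μ₂' →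
      IsPlusType k m' μ₁' → IsPlusType k m' μ₂' →
      (TupleIso m ![μ₁, μ₂] m' ![μ₁', μ₂'] ↔ (μ₁ = μ₂ ↔ μ₁' = μ₂'))) ∧
    (∃ (m : (Fin (2 * k) → ZMod 2) → (Fin (2 * k) → ZMod 2) → ZMod 2)
        (μ₁ μ₂ : (Fin (2 * k) → ZMod 2) → ZMod 2),
      IsAltNondeg m ∧ IsQuadRef m μ₁ ∧ IsQuadRef m μ₂ ∧
      IsPlusType k m μ₁ ∧ IsPlusType k m μ₂ ∧ μ₁ = μ₂) ∧
    (∃ (m : (Fin (2 * k) → ZMod 2) → (Fin (2 * k) → ZMod 2) → ZMod 2)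
        (μ₁ μ₂ : (Fin (2 * k) → ZMod 2) → ZMod 2),
      IsAltNondeg m ∧ IsQuadRef m μ₁ ∧ IsQuadRef m μ₂ ∧
      IsPlusType k m μ₁ ∧ IsPlusType k m μ₂ ∧ μ₁ ≠ μ₂) := by
  have hk0 : 0 < k := hk
  refine ⟨?_, ?_, ?_⟩
  · intro V V' _ _ _ _ m μ₁ μ₂ m' μ₁' μ₂' _ _ hm hq1 hq2 hp1 hp2 hm' hq1' hq2' hp1' hp2'
    constructor
    · intro h
      exact ⟨TC.iso_eq_dir h, TC.iso_eq_dir (TC.tupleIso_symm h)⟩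
    · intro hiff
      obtain ⟨ν, hqν, hpν, hiso, hνq, hνn⟩ := TC.to_model hm hq1 hq2 hp1 hp2
      obtain ⟨ν', hqν', hpν', hiso', hνq', hνn'⟩ := TC.to_model hm' hq1' hq2' hp1' hp2'
      by_cases h12 : μ₁ = μ₂
      · have h12' : μ₁' = μ₂' := hiff.mp h12
        rw [hνq h12] at hiso
        rw [hνq' h12'] at hiso'
        exact TC.tupleIso_trans hiso (TC.tupleIso_symm hiso')
      · have h12' : μ₁' ≠ μ₂' := fun hc => h12 (hiff.mpr hc)
        exact TC.tupleIso_trans hiso (TC.tupleIso_trans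
          (TC.model_caseB hk0 hqν hpν (hνn h12))
          (TC.tupleIso_trans (TC.tupleIso_symm (TC.model_caseB hk0 hqν' hpν' (hνn' h12')))
            (TC.tupleIso_symm hiso')))
  · obtain ⟨ha, hb, hc⟩ := TC.transfer (TC.modelToStd k) TC.q0_quadref TC.q0_plustype
    exact ⟨_, _, _, ha, hb, hb, hc, hc, rfl⟩
  · obtain ⟨ha, hb, hc⟩ := TC.transfer (TC.modelToStd k) TC.q0_quadref TC.q0_plustype
    obtain ⟨-, hb2, hc2⟩ :=
      TC.transfer (TC.modelToStd k) (TC.nu0_quadref hk0) (TC.nu0_plustype hk0)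
    refine ⟨_, _, _, ha, hb, hb2, hc, hc2, fun hcon => ?_⟩
    have h := congrFun hcon ((TC.modelToStd k) (TC.fZ hk0))
    rw [(TC.modelToStd k).symm_apply_apply, TC.q0_fZ hk0, TC.nu0_fZ hk0] at h
    exact zero_ne_one h

end
end

section
/- Let k ≥ 2 and consider tuples (V, m, μ₁, μ₂, μ₃) where V is a 2k-dimensional 𝔽₂-vector space, m is a nondegenerate alternating bilinear form on V, and μ₁, μ₂, μ₃ are quadratic refinements of m such that each (V, m, μ_i), i = 1, 2, 3, is of plus type. Then there are exactly four isomorphism classes of such tuples: there exist four pairwise non-isomorphic such tuples with the property that every such tuple is isomorphic to one of them. -/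
noncomputable section

open Sum Finset

abbrev F2 := ZMod 2

lemma two_cases (a : F2) : a = 0 ∨ a = 1 := by revert a; decide

lemma add_self_F2 (a : F2) : a + a = 0 := by revert a; decide

lemma sq_F2 (a : F2) : a * a = a := by revert a; decide

/-- the sign character -/
def chi (a : F2) : ℤ := if a = 0 then 1 else -1

lemma chi_add (a b : F2) : chi (a + b) = chi a * chi b := by revert a b; decide

lemma chi_one : chi 1 = -1 := rfl

lemma chi_zero : chi 0 = 1 := rfl

variable {k : ℕ}

/-- standard symplectic form -/
def m0 (x y : (Fin k ⊕ Fin k) → F2) : F2 :=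
  ∑ i, (x (inl i) * y (inr i) + x (inr i) * y (inl i))

/-- standard plus-type quadratic form -/
def q0 (x : (Fin k ⊕ Fin k) → F2) : F2 := ∑ i, x (inl i) * x (inr i)

lemma m0_add_left (x x' y : (Fin k ⊕ Fin k) → F2) :
    m0 (x + x') y = m0 x y + m0 x' y := by
  unfold m0
  rw [← Finset.sum_add_distrib]
  exact Finset.sum_congr rfl fun i _ => by simp [Pi.add_apply]; ring

lemma m0_add_right (x y y' : (Fin k ⊕ Fin k) → F2) :
    m0 x (y + y') = m0 x y + m0 x y' := by
  unfold m0
  rw [← Finset.sum_add_distrib]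
  exact Finset.sum_congr rfl fun i _ => by simp [Pi.add_apply]; ring

lemma m0_comm (x y : (Fin k ⊕ Fin k) → F2) : m0 x y = m0 y x :=
  Finset.sum_congr rfl fun i _ => by ring

lemma m0_alt (x : (Fin k ⊕ Fin k) → F2) : m0 x x = 0 := by
  unfold m0
  rw [Finset.sum_eq_zero]
  intro i _
  rw [mul_comm]
  exact add_self_F2 _

lemma m0_zero_left (y : (Fin k ⊕ Fin k) → F2) : m0 0 y = 0 := by
  unfold m0; rw [Finset.sum_eq_zero]; intro i _; simp

lemma m0_zero_right (y : (Fin k ⊕ Fin k) → F2) : m0 y 0 = 0 := by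
  rw [m0_comm]; exact m0_zero_left y

lemma m0_smul_left (a : F2) (x y : (Fin k ⊕ Fin k) → F2) :
    m0 (a • x) y = a * m0 x y := by
  rcases two_cases a with h | h <;> subst h
  · simp [m0_zero_left]
  · simp

lemma m0_smul_right (a : F2) (x y : (Fin k ⊕ Fin k) → F2) :
    m0 x (a • y) = a * m0 x y := by
  rw [m0_comm, m0_smul_left, m0_comm]

lemma q0_add (x y : (Fin k ⊕ Fin k) → F2) :
    q0 (x + y) = q0 x + q0 y + m0 x y := by
  unfold q0 m0
  rw [← Finset.sum_add_distrib, ← Finset.sum_add_distrib]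
  exact Finset.sum_congr rfl fun i _ => by simp [Pi.add_apply]; ring

lemma q0_zero : q0 (0 : (Fin k ⊕ Fin k) → F2) = 0 := by
  unfold q0; rw [Finset.sum_eq_zero]; intro i _; simp

lemma q0_smul (a : F2) (x : (Fin k ⊕ Fin k) → F2) : q0 (a • x) = a * q0 x := by
  rcases two_cases a with h | h <;> subst h
  · simp [q0_zero]
  · simp

lemma q0_expand (a : F2) (x c : (Fin k ⊕ Fin k) → F2) :
    q0 (x + a • c) = q0 x + a * q0 c + a * m0 x c := by
  rw [q0_add, q0_smul, m0_smul_right]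

lemma m0_expand (a b : F2) (x y c d : (Fin k ⊕ Fin k) → F2) :
    m0 (x + a • c) (y + b • d)
      = m0 x y + b * m0 x d + a * m0 c y + a * (b * m0 c d) := by
  rw [m0_add_left, m0_add_right, m0_add_right, m0_smul_left, m0_smul_left,
    m0_smul_right, m0_smul_right]
  ring

/-- IsQuadRef m0 q0 -/
lemma quadref_q0 : ∀ x y : (Fin k ⊕ Fin k) → F2, m0 x y = q0 x + q0 y + q0 (x + y) := by
  intro x y
  rw [q0_add]
  linear_combination -add_self_F2 (q0 x + q0 y)

/-- basis vectors -/
def ee (j : Fin k ⊕ Fin k) : (Fin k ⊕ Fin k) → F2 := Pi.single j 1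

lemma m0_single_left (i : Fin k) (y : (Fin k ⊕ Fin k) → F2) :
    m0 (ee (inl i)) y = y (inr i) := by
  unfold m0 ee
  rw [Finset.sum_eq_single i]
  · simp [Pi.single_apply]
  · intro b _ hb
    simp [Pi.single_apply, hb, Ne.symm hb]
  · simp

lemma m0_single_right' (i : Fin k) (y : (Fin k ⊕ Fin k) → F2) :
    m0 (ee (inr i)) y = y (inl i) := by
  unfold m0 ee
  rw [Finset.sum_eq_single i]
  · simp [Pi.single_apply]
  · intro b _ hb
    simp [Pi.single_apply, hb, Ne.symm hb]
  · simp

lemma q0_single (j : Fin k ⊕ Fin k) : q0 (ee j) = 0 := by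
  unfold q0 ee
  rw [Finset.sum_eq_zero]
  intro i _
  rcases j with j | j <;> simp [Pi.single_apply]

/-- the index swap -/
def swapIdx : Fin k ⊕ Fin k → Fin k ⊕ Fin k := Sum.elim inr inl

lemma m0_dual (v : (Fin k ⊕ Fin k) → F2) (j : Fin k ⊕ Fin k) :
    m0 v (ee (swapIdx j)) = v j := by
  rcases j with i | i
  · rw [m0_comm]; exact m0_single_right' i v
  · rw [m0_comm]; exact m0_single_left i v

lemma m0_nondeg (v : (Fin k ⊕ Fin k) → F2) (h : ∀ y, m0 v y = 0) : v = 0 := by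
  funext j
  have := h (ee (swapIdx j))
  rw [m0_dual] at this
  simpa using this

lemma isAltNondeg_m0 : IsAltNondeg (m0 (k := k)) :=
  ⟨m0_add_left, m0_add_right, m0_alt, m0_nondeg⟩


section Ext

variable {V : Type} [AddCommGroup V] [Module F2 V]

lemma F2_cancel : ∀ a b : F2, a + b = 0 → a = b := by decide

lemma alt_comm {m : V → V → F2} (hm : IsAltNondeg m) (x y : V) : m x y = m y x := by
  have h := hm.2.2.1 (x + y)
  rw [hm.1, hm.2.1, hm.2.1, hm.2.2.1 x, hm.2.2.1 y, zero_add, add_zero] at h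
  exact F2_cancel _ _ h

lemma quadref_zero {m : V → V → F2} {μ : V → F2} (h00 : m 0 0 = 0)
    (hμ : IsQuadRef m μ) : μ 0 = 0 := by
  have h := hμ 0 0
  rw [add_zero] at h
  rw [h00] at h
  revert h
  generalize μ 0 = a
  revert a
  decide

/-- package an additive map with zero into a linear map over F2 -/
def mkLin (δ : V → F2) (hadd : ∀ x y, δ (x + y) = δ x + δ y) (h0 : δ 0 = 0) :
    V →ₗ[F2] F2 where
  toFun := δ
  map_add' := hadd
  map_smul' := by
    intro a x
    rcases two_cases a with h | h <;> subst h
    · simp [h0]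
    · simp

lemma quadref_ext {ι : Type} [Fintype ι] {m : V → V → F2} {μ ν : V → F2}
    (h00 : m 0 0 = 0) (hμ : IsQuadRef m μ) (hν : IsQuadRef m ν)
    (B : Module.Basis ι F2 V) (hB : ∀ j, μ (B j) = ν (B j)) : ∀ x, μ x = ν x := by
  have hμ0 := quadref_zero h00 hμ
  have hν0 := quadref_zero h00 hν
  set δ : V →ₗ[F2] F2 := mkLin (fun x => μ x + ν x)
    (fun x y => by
      have h1 := hμ x y
      have h2 := hν x y
      have key : ∀ M A B C A' B' C' : F2, M = A + B + C → M = A' + B' + C' →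
          C + C' = A + A' + (B + B') := by decide
      exact key _ _ _ _ _ _ _ h1 h2)
    (by show μ 0 + ν 0 = 0; rw [hμ0, hν0, add_zero]) with hδ
  have hz : δ = 0 := by
    apply B.ext
    intro j
    show μ (B j) + ν (B j) = 0
    rw [hB j]
    exact add_self_F2 _
  intro x
  have h' : μ x + ν x = 0 := LinearMap.congr_fun hz x
  exact F2_cancel _ _ h'

/-- bilinear maps agreeing on a basis agree -/
lemma bilin_ext {ι : Type} [Fintype ι] {m m' : V → V → F2}
    (hal : ∀ x y z, m (x + y) z = m x z + m y z)
    (har : ∀ x y z, m x (y + z) = m x y + m x z)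
    (hal' : ∀ x y z, m' (x + y) z = m' x z + m' y z)
    (har' : ∀ x y z, m' x (y + z) = m' x y + m' x z)
    (B : Module.Basis ι F2 V) (hB : ∀ i j, m (B i) (B j) = m' (B i) (B j)) :
    ∀ x y, m x y = m' x y := by
  have zl : ∀ (mm : V → V → F2), (∀ x y z, mm (x + y) z = mm x z + mm y z) →
      ∀ y, mm 0 y = 0 := by
    intro mm h y
    have h1 := h 0 0 y
    rw [add_zero] at h1
    have key : ∀ a : F2, a = a + a → a = 0 := by decide
    exact key _ h1
  have zr : ∀ (mm : V → V → F2), (∀ x y z, mm x (y + z) = mm x y + mm x z) →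
      ∀ y, mm y 0 = 0 := by
    intro mm h y
    have h1 := h y 0 0
    rw [add_zero] at h1
    have key : ∀ a : F2, a = a + a → a = 0 := by decide
    exact key _ h1
  have smul_left : ∀ (mm : V → V → F2), (∀ x y z, mm (x + y) z = mm x z + mm y z) →
      ∀ (a : F2) x y, mm (a • x) y = a * mm x y := by
    intro mm h a x y
    rcases two_cases a with ha | ha <;> subst ha
    · rw [zero_smul, zl mm h, zero_mul]
    · rw [one_smul, one_mul]
  have smul_right : ∀ (mm : V → V → F2), (∀ x y z, mm x (y + z) = mm x y + mm x z) →
      ∀ (a : F2) x y, mm x (a • y) = a * mm x y := by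
    intro mm h a x y
    rcases two_cases a with ha | ha <;> subst ha
    · rw [zero_smul, zr mm h, zero_mul]
    · rw [one_smul, one_mul]
  set F : V →ₗ[F2] V →ₗ[F2] F2 := LinearMap.mk₂ F2 m hal
    (fun a x y => by rw [smul_left m hal, smul_eq_mul]) har
    (fun a x y => by rw [smul_right m har, smul_eq_mul]) with hF
  set G : V →ₗ[F2] V →ₗ[F2] F2 := LinearMap.mk₂ F2 m' hal'
    (fun a x y => by rw [smul_left m' hal', smul_eq_mul]) har'
    (fun a x y => by rw [smul_right m' har', smul_eq_mul]) with hG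
  have hFG : F = G := by
    apply B.ext
    intro i
    apply B.ext
    intro j
    show m (B i) (B j) = m' (B i) (B j)
    exact hB i j
  intro x y
  have := LinearMap.congr_fun (LinearMap.congr_fun hFG x) y
  exact this

/-- the coordinate normal form of a plus-type space -/
lemma plus_coord {k : ℕ} {m : V → V → F2} {μ : V → F2}
    (hm : IsAltNondeg m) (hq : IsQuadRef m μ) (hp : IsPlusType k m μ) :
    ∃ f : V ≃ₗ[F2] ((Fin k ⊕ Fin k) → F2),
      (∀ x y, m0 (f x) (f y) = m x y) ∧ ∀ x, q0 (f x) = μ x := by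
  classical
  obtain ⟨B, h1, h2, h3, h4, h5⟩ := hp
  have fB : ∀ j, B.equivFun (B j) = ee j := by
    intro j
    funext j'
    rw [Module.Basis.equivFun_self, ee, Pi.single_apply]
    exact if_congr eq_comm rfl rfl
  have hm0 : ∀ x y, m0 (B.equivFun x) (B.equivFun y) = m x y := by
    intro x y
    refine bilin_ext (m := fun x y => m0 (B.equivFun x) (B.equivFun y)) (m' := m)
      ?_ ?_ hm.1 hm.2.1 B ?_ x y
    · intro a b c; show m0 (B.equivFun (a + b)) _ = _; rw [map_add, m0_add_left]
    · intro a b c; show m0 _ (B.equivFun (b + c)) = _; rw [map_add, m0_add_right]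
    · intro i j
      show m0 (B.equivFun (B i)) (B.equivFun (B j)) = _
      rw [fB, fB]
      rcases i with i | i <;> rcases j with j | j
      · rw [m0_single_left]
        rw [h2]
        simp [ee, Pi.single_apply]
      · rw [m0_single_left]
        rw [h1]
        simp [ee, Pi.single_apply]
      · rw [m0_single_right']
        rw [alt_comm hm, h1]
        simp [ee, Pi.single_apply, eq_comm]
      · rw [m0_single_right']
        rw [h3]
        simp [ee, Pi.single_apply]
  refine ⟨B.equivFun, hm0, ?_⟩
  have hqr : IsQuadRef m (fun x => q0 (B.equivFun x)) := by
    intro x y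
    rw [← hm0 x y, quadref_q0, ← map_add]
  exact fun x => quadref_ext (hm.2.2.1 0) hqr hq B
    (fun j => by
      show q0 (B.equivFun (B j)) = μ (B j)
      rw [fB, q0_single]
      rcases j with i | i
      · exact (h4 i).symm
      · exact (h5 i).symm) x

/-- transfer of plus type along compatible equivalences -/
lemma plus_transfer {k : ℕ} {V' : Type} [AddCommGroup V'] [Module F2 V']
    (E : V ≃ₗ[F2] V') {m : V → V → F2} {m' : V' → V' → F2}
    {μ : V → F2} {μ' : V' → F2}
    (hE : ∀ x y, m' (E x) (E y) = m x y) (hμ : ∀ x, μ' (E x) = μ x)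
    (hp : IsPlusType k m μ) : IsPlusType k m' μ' := by
  obtain ⟨B, h1, h2, h3, h4, h5⟩ := hp
  refine ⟨B.map E, ?_, ?_, ?_, ?_, ?_⟩ <;> intros <;>
    simp only [Module.Basis.map_apply, hE, hμ] <;>
    first
      | apply h1
      | apply h2
      | apply h3
      | apply h4
      | apply h5

end Ext

section Gauss

lemma chi_sum {α : Type} (s : Finset α) (f : α → F2) :
    chi (∑ i ∈ s, f i) = ∏ i ∈ s, chi (f i) := by
  classical
  induction s using Finset.induction_on with
  | empty => simp [chi_zero]
  | insert a s ha ih =>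
    rw [Finset.sum_insert ha, Finset.prod_insert ha, chi_add, ih]

lemma sum_prod_fin {α : Type} [Fintype α] (g : α → ℤ) :
    ∀ n, ∑ y : Fin n → α, ∏ i, g (y i) = (∑ a, g a) ^ n := by
  intro n
  induction n with
  | zero => simp
  | succ n ih =>
    rw [← Equiv.sum_comp (Fin.consEquiv (fun _ => α)) (fun y => ∏ i, g (y i))]
    rw [Fintype.sum_prod_type]
    have step : ∀ (a : α) (z : Fin n → α),
        (∏ i, g ((Fin.consEquiv (fun _ => α)) (a, z) i)) = g a * ∏ i, g (z i) := by
      intro a z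
      rw [Fin.prod_univ_succ]
      rfl
    calc (∑ a : α, ∑ z : Fin n → α, ∏ i, g ((Fin.consEquiv (fun _ => α)) (a, z) i))
        = ∑ a : α, ∑ z : Fin n → α, g a * ∏ i, g (z i) := by
          refine Finset.sum_congr rfl fun a _ => Finset.sum_congr rfl fun z _ => step a z
      _ = ∑ a : α, g a * ∑ z : Fin n → α, ∏ i, g (z i) := by
          refine Finset.sum_congr rfl fun a _ => ?_
          rw [Finset.mul_sum]
      _ = (∑ a : α, g a) * (∑ z : Fin n → α, ∏ i, g (z i)) := by
          rw [Finset.sum_mul]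
      _ = (∑ a : α, g a) ^ (n + 1) := by rw [ih, pow_succ]; ring

variable {k : ℕ}

/-- the Gauss sum of the standard plus form -/
lemma S0 : ∑ x : (Fin k ⊕ Fin k) → F2, chi (q0 x) = 2 ^ k := by
  classical
  let Φ : ((Fin k ⊕ Fin k) → F2) ≃ (Fin k → F2 × F2) :=
    { toFun := fun x i => (x (inl i), x (inr i))
      invFun := fun y => Sum.elim (fun i => (y i).1) (fun i => (y i).2)
      left_inv := fun x => by funext j; cases j <;> rfl
      right_inv := fun y => by funext i; rfl }
  have h1 : ∀ x : (Fin k ⊕ Fin k) → F2,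
      chi (q0 x) = ∏ i, chi ((Φ x i).1 * (Φ x i).2) := by
    intro x
    rw [q0, chi_sum]
    rfl
  rw [Fintype.sum_congr _ _ h1]
  rw [Equiv.sum_comp Φ (fun y => ∏ i, chi ((y i).1 * (y i).2))]
  rw [sum_prod_fin (fun p : F2 × F2 => chi (p.1 * p.2)) k]
  have : (∑ p : F2 × F2, chi (p.1 * p.2)) = 2 := by decide
  rw [this]

lemma sum_chi_linear (v : (Fin k ⊕ Fin k) → F2) :
    ∑ x : (Fin k ⊕ Fin k) → F2, chi (q0 x + m0 v x) = chi (q0 v) * 2 ^ k := by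
  have key : ∀ x, q0 x + m0 v x = q0 v + q0 (x + v) := by
    intro x
    have h := q0_add x v
    rw [m0_comm]
    have k2 : ∀ A B C M : F2, A = B + C + M → B + M = C + A := by decide
    exact k2 _ _ _ _ h
  calc ∑ x : (Fin k ⊕ Fin k) → F2, chi (q0 x + m0 v x)
      = ∑ x : (Fin k ⊕ Fin k) → F2, chi (q0 v) * chi (q0 (x + v)) := by
        refine Finset.sum_congr rfl fun x _ => ?_
        rw [key x, chi_add]
    _ = chi (q0 v) * ∑ x : (Fin k ⊕ Fin k) → F2, chi (q0 (x + v)) := by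
        rw [Finset.mul_sum]
    _ = chi (q0 v) * ∑ y : (Fin k ⊕ Fin k) → F2, chi (q0 y) := by
        congr 1
        exact Equiv.sum_comp (Equiv.addRight v) (fun y => chi (q0 y))
    _ = chi (q0 v) * 2 ^ k := by rw [S0]

lemma sum_chi_plus {μ : ((Fin k ⊕ Fin k) → F2) → F2}
    (hq : IsQuadRef m0 μ) (hp : IsPlusType k m0 μ) :
    ∑ x : (Fin k ⊕ Fin k) → F2, chi (μ x) = 2 ^ k := by
  obtain ⟨f, hm, hμ⟩ := plus_coord isAltNondeg_m0 hq hp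
  calc ∑ x : (Fin k ⊕ Fin k) → F2, chi (μ x)
      = ∑ x : (Fin k ⊕ Fin k) → F2, chi (q0 (f x)) := by
        refine Finset.sum_congr rfl fun x _ => ?_
        rw [hμ]
    _ = ∑ y : (Fin k ⊕ Fin k) → F2, chi (q0 y) := Equiv.sum_comp f.toEquiv (fun y => chi (q0 y))
    _ = 2 ^ k := S0

lemma swapIdx_swapIdx (j : Fin k ⊕ Fin k) : swapIdx (swapIdx j) = j := by
  cases j <;> rfl

/-- every plus-type refinement of m0 is q0 plus a singular linear term -/
lemma rep_linear {ρ : ((Fin k ⊕ Fin k) → F2) → F2}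
    (hρ : IsQuadRef m0 ρ) (hp : IsPlusType k m0 ρ) :
    ∃ v, q0 v = 0 ∧ ∀ x, ρ x = q0 x + m0 v x := by
  classical
  have hρ0 : ρ 0 = 0 := quadref_zero (m0_alt 0) hρ
  have hδadd : ∀ x y, (ρ (x + y) + q0 (x + y)) = (ρ x + q0 x) + (ρ y + q0 y) := by
    intro x y
    have h1 := hρ x y
    have h2 := quadref_q0 x y
    have key : ∀ M A B C A' B' C' : F2, M = A + B + C → M = A' + B' + C' →
        C + C' = A + A' + (B + B') := by decide
    exact key _ _ _ _ _ _ _ h1 h2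
  set δ : ((Fin k ⊕ Fin k) → F2) →ₗ[F2] F2 :=
    mkLin (fun x => ρ x + q0 x) hδadd (by show ρ 0 + q0 0 = 0; rw [hρ0, q0_zero, add_zero])
    with hδdef
  set v : (Fin k ⊕ Fin k) → F2 := fun j => δ (ee (swapIdx j)) with hv
  have hrep : ∀ x, m0 v x = δ x := by
    have hMv : (mkLin (fun x => m0 v x) (m0_add_right v) (m0_zero_right v)) = δ := by
      apply (Pi.basisFun F2 (Fin k ⊕ Fin k)).ext
      intro j
      show m0 v (Pi.basisFun F2 _ j) = δ (Pi.basisFun F2 _ j)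
      rw [Pi.basisFun_apply]
      show m0 v (ee j) = δ (ee j)
      have h2 := m0_dual v (swapIdx j)
      rw [swapIdx_swapIdx] at h2
      rw [h2, hv]
      simp only [swapIdx_swapIdx]
    intro x
    exact LinearMap.congr_fun hMv x
  have hpt : ∀ x, ρ x = q0 x + m0 v x := by
    intro x
    have h := hrep x
    have h' : m0 v x = ρ x + q0 x := h
    have key : ∀ A B C : F2, A = B + C → B = C + A := by decide
    exact key _ _ _ h'
  have hsum := sum_chi_plus hρ hp
  have hsum2 : ∑ x : (Fin k ⊕ Fin k) → F2, chi (q0 x + m0 v x) = 2 ^ k := by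
    rw [← hsum]
    exact Finset.sum_congr rfl fun x _ => by rw [hpt x]
  rw [sum_chi_linear] at hsum2
  have hq0v : q0 v = 0 := by
    rcases two_cases (q0 v) with h | h
    · exact h
    · exfalso
      rw [h, chi_one] at hsum2
      have hpos : (0:ℤ) < 2 ^ k := pow_pos (by norm_num) k
      omega
  exact ⟨v, hq0v, hpt⟩

end Gauss

section Iso

variable {k : ℕ}

/-- the orthogonal group of (m0, q0) -/
structure O0 (k : ℕ) where
  g : ((Fin k ⊕ Fin k) → F2) ≃ₗ[F2] ((Fin k ⊕ Fin k) → F2)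
  hm : ∀ x y, m0 (g x) (g y) = m0 x y
  hq : ∀ x, q0 (g x) = q0 x

def O0.comp (g1 g2 : O0 k) : O0 k where
  g := g1.g ≪≫ₗ g2.g
  hm := fun x y => by
    show m0 (g2.g (g1.g x)) (g2.g (g1.g y)) = _
    rw [g2.hm, g1.hm]
  hq := fun x => by
    show q0 (g2.g (g1.g x)) = _
    rw [g2.hq, g1.hq]

lemma O0.comp_apply (g1 g2 : O0 k) (x : (Fin k ⊕ Fin k) → F2) :
    (g1.comp g2).g x = g2.g (g1.g x) := rfl

def O0.one : O0 k where
  g := LinearEquiv.refl F2 _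
  hm := fun _ _ => rfl
  hq := fun _ => rfl

lemma O0.one_apply (x : (Fin k ⊕ Fin k) → F2) : (O0.one (k := k)).g x = x := rfl

/-- transvection-type linear map -/
def tLin (c : (Fin k ⊕ Fin k) → F2) :
    ((Fin k ⊕ Fin k) → F2) →ₗ[F2] ((Fin k ⊕ Fin k) → F2) where
  toFun := fun x => x + m0 x c • c
  map_add' := fun x y => by
    simp only [m0_add_left, add_smul]
    abel
  map_smul' := fun a x => by
    rcases two_cases a with h | h <;> subst h
    · simp [m0_zero_left]
    · simp

lemma tLin_apply (c x : (Fin k ⊕ Fin k) → F2) : tLin c x = x + m0 x c • c := rfl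

lemma tLin_invol (c : (Fin k ⊕ Fin k) → F2) : Function.Involutive (tLin c) := by
  intro x
  rw [tLin_apply, tLin_apply, m0_add_left, m0_smul_left, m0_alt, mul_zero, add_zero]
  have h : m0 x c • c + m0 x c • c = 0 := by
    rw [← add_smul, add_self_F2, zero_smul]
  rw [add_assoc, h, add_zero]

def tEquiv (c : (Fin k ⊕ Fin k) → F2) :
    ((Fin k ⊕ Fin k) → F2) ≃ₗ[F2] ((Fin k ⊕ Fin k) → F2) :=
  LinearEquiv.ofInvolutive (tLin c) (tLin_invol c)

lemma tEquiv_apply (c x : (Fin k ⊕ Fin k) → F2) : tEquiv c x = x + m0 x c • c := rfl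

lemma tEquiv_m0 (c x y : (Fin k ⊕ Fin k) → F2) :
    m0 (tEquiv c x) (tEquiv c y) = m0 x y := by
  rw [tEquiv_apply, tEquiv_apply, m0_expand, m0_alt, m0_comm c y]
  generalize m0 x y = A
  generalize m0 x c = B
  generalize m0 y c = C
  revert A B C
  decide

lemma tEquiv_q0 (c x : (Fin k ⊕ Fin k) → F2) :
    q0 (tEquiv c x) = q0 x + m0 x c * q0 c + m0 x c := by
  rw [tEquiv_apply, q0_expand]
  have h : m0 x c * m0 x c = m0 x c := sq_F2 _
  rw [h]

/-- transvection -/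
def tv (c : (Fin k ⊕ Fin k) → F2) (hc : q0 c = 1) : O0 k where
  g := tEquiv c
  hm := tEquiv_m0 c
  hq := fun x => by
    rw [tEquiv_q0, hc, mul_one]
    have h : m0 x c + m0 x c = 0 := add_self_F2 _
    rw [add_assoc, h, add_zero]

lemma tv_apply (c : (Fin k ⊕ Fin k) → F2) (hc : q0 c = 1) (x) :
    (tv c hc).g x = x + m0 x c • c := rfl

/-- Eichler-type linear map -/
def eLin (a s : (Fin k ⊕ Fin k) → F2) :
    ((Fin k ⊕ Fin k) → F2) →ₗ[F2] ((Fin k ⊕ Fin k) → F2) where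
  toFun := fun x => x + m0 x a • s + m0 x s • a
  map_add' := fun x y => by
    simp only [m0_add_left, add_smul]
    abel
  map_smul' := fun t x => by
    rcases two_cases t with h | h <;> subst h
    · simp [m0_zero_left]
    · simp

lemma eLin_apply (a s x : (Fin k ⊕ Fin k) → F2) :
    eLin a s x = x + m0 x a • s + m0 x s • a := rfl

section Eichler

variable {a s : (Fin k ⊕ Fin k) → F2} (ha : q0 a = 0) (hs : q0 s = 0)
  (has : m0 a s = 0)

include has in
lemma eLin_invol : Function.Involutive (eLin a s) := by
  intro x
  rw [eLin_apply, eLin_apply]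
  have h1 : m0 (x + m0 x a • s + m0 x s • a) a = m0 x a := by
    rw [m0_add_left, m0_add_left, m0_smul_left, m0_smul_left, m0_alt,
      m0_comm s a, has]
    generalize m0 x a = A; generalize m0 x s = B
    revert A B; decide
  have h2 : m0 (x + m0 x a • s + m0 x s • a) s = m0 x s := by
    rw [m0_add_left, m0_add_left, m0_smul_left, m0_smul_left, m0_alt, has]
    generalize m0 x a = A; generalize m0 x s = B
    revert A B; decide
  rw [h1, h2]
  have hp : m0 x a • s + m0 x a • s = 0 := by rw [← add_smul, add_self_F2, zero_smul]
  have hq : m0 x s • a + m0 x s • a = 0 := by rw [← add_smul, add_self_F2, zero_smul]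
  calc x + m0 x a • s + m0 x s • a + m0 x a • s + m0 x s • a
      = x + (m0 x a • s + m0 x a • s) + (m0 x s • a + m0 x s • a) := by abel
    _ = x := by rw [hp, hq, add_zero, add_zero]

include has in
lemma eLin_m0 (x y : (Fin k ⊕ Fin k) → F2) :
    m0 (eLin a s x) (eLin a s y) = m0 x y := by
  rw [eLin_apply, eLin_apply]
  simp only [m0_add_left, m0_add_right, m0_smul_left, m0_smul_right]
  rw [m0_alt s, m0_alt a, m0_comm s y, m0_comm a y, m0_comm s a, has]
  generalize m0 x y = A
  generalize m0 x a = B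
  generalize m0 x s = C
  generalize m0 y a = D
  generalize m0 y s = E
  revert A B C D E; decide

include ha hs has in
lemma eLin_q0 (x : (Fin k ⊕ Fin k) → F2) : q0 (eLin a s x) = q0 x := by
  rw [eLin_apply, q0_expand, q0_expand, ha, hs]
  rw [m0_add_left, m0_smul_left, m0_comm s a, has]
  generalize q0 x = Q
  generalize m0 x a = A
  generalize m0 x s = B
  revert Q A B; decide

/-- Eichler transformation -/
def ei : O0 k where
  g := LinearEquiv.ofInvolutive (eLin a s) (eLin_invol has)
  hm := eLin_m0 has
  hq := eLin_q0 ha hs has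

lemma ei_apply (x : (Fin k ⊕ Fin k) → F2) :
    (ei ha hs has).g x = x + m0 x a • s + m0 x s • a := rfl

end Eichler

end Iso

section Helpers

variable {k : ℕ}

lemma vadd_self (v : (Fin k ⊕ Fin k) → F2) : v + v = 0 := by
  rw [← one_smul F2 v, ← add_smul]
  have : (1 : F2) + 1 = 0 := by decide
  rw [this, zero_smul]

lemma eq_of_vadd_eq_zero {x y : (Fin k ⊕ Fin k) → F2} (h : x + y = 0) : x = y := by
  have h2 : x + y + y = y := by rw [h, zero_add]
  rwa [add_assoc, vadd_self, add_zero] at h2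

lemma cancel_left (u p : (Fin k ⊕ Fin k) → F2) : u + (u + p) = p := by
  rw [← add_assoc, vadd_self, zero_add]

lemma ee_apply (j j' : Fin k ⊕ Fin k) : ee j j' = if j' = j then 1 else 0 := by
  rw [ee, Pi.single_apply]

lemma ee_ne_zero (j : Fin k ⊕ Fin k) : ee j ≠ 0 := by
  intro h
  have := congrFun h j
  rw [ee_apply] at this
  simp at this

lemma exists_one {w : (Fin k ⊕ Fin k) → F2} (hw : w ≠ 0) : ∃ j, w j = 1 := by
  by_contra h
  push_neg at h
  apply hw
  funext j
  rcases two_cases (w j) with h1 | h1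
  · exact h1
  · exact absurd h1 (h j)

lemma m0_ee_lr (i j : Fin k) : m0 (ee (inl i)) (ee (inr j)) = if i = j then 1 else 0 := by
  rw [m0_single_left, ee_apply]
  simp [Sum.inr.injEq, eq_comm]

lemma m0_ee_ll (i j : Fin k) : m0 (ee (inl i)) (ee (inl j)) = 0 := by
  rw [m0_single_left, ee_apply]
  simp

lemma m0_ee_rr (i j : Fin k) : m0 (ee (inr i)) (ee (inr j)) = 0 := by
  rw [m0_single_right', ee_apply]
  simp

lemma m0_ee_rl (i j : Fin k) : m0 (ee (inr i)) (ee (inl j)) = if i = j then 1 else 0 := by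
  rw [m0_single_right', ee_apply]
  simp [Sum.inl.injEq, eq_comm]

/-- solving two linear conditions -/
lemma sub_two {u w : (Fin k ⊕ Fin k) → F2} (hu : u ≠ 0) (hw : w ≠ 0) (huw : u ≠ w)
    (a b : F2) : ∃ x, m0 u x = a ∧ m0 w x = b := by
  have hj : ∃ j, u j ≠ w j := by
    by_contra h
    push_neg at h
    exact huw (funext h)
  obtain ⟨j, hj⟩ := hj
  rcases two_cases (u j) with h1 | h1 <;> rcases two_cases (w j) with h2 | h2
  · exact absurd (h1.trans h2.symm) hj
  · -- u j = 0, w j = 1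
    obtain ⟨j', hj'⟩ := exists_one hu
    refine ⟨(b + a * w j') • ee (swapIdx j) + a • ee (swapIdx j'), ?_, ?_⟩
    · rw [m0_add_right, m0_smul_right, m0_smul_right, m0_dual, m0_dual, h1, hj']
      generalize w j' = t
      revert a b t
      decide
    · rw [m0_add_right, m0_smul_right, m0_smul_right, m0_dual, m0_dual, h2]
      generalize w j' = s1
      generalize w j = s2
      revert a b s1 s2
      decide
  · -- u j = 1, w j = 0
    obtain ⟨j', hj'⟩ := exists_one hw
    refine ⟨(a + b * u j') • ee (swapIdx j) + b • ee (swapIdx j'), ?_, ?_⟩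
    · rw [m0_add_right, m0_smul_right, m0_smul_right, m0_dual, m0_dual, h1]
      generalize u j' = t
      revert a b t
      decide
    · rw [m0_add_right, m0_smul_right, m0_smul_right, m0_dual, m0_dual, h2, hj']
      generalize u j' = t
      revert a b t
      decide
  · exact absurd (h1.trans h2.symm) hj

end Helpers

section Trans

variable {n : ℕ}

/-- transitivity on nonzero singular vectors -/
lemma T1 (u : (Fin (n+2) ⊕ Fin (n+2)) → F2) (hq : q0 u = 0) (hu : u ≠ 0) :
    ∃ g : O0 (n+2), g.g u = ee (inl 0) := by
  by_cases he : u = ee (inl 0)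
  · exact ⟨O0.one, by rw [O0.one_apply, he]⟩
  rcases two_cases (m0 u (ee (inl 0))) with hm1 | hm1
  · -- not paired with e1 : bridge
    obtain ⟨x, hx1, hx2'⟩ := sub_two hu (ee_ne_zero (inl 0)) he 1 1
    set p := x + q0 x • u with hp
    have hqp : q0 p = 0 := by
      rw [hp, q0_expand, hq, m0_comm x u, hx1]
      generalize q0 x = t
      revert t; decide
    have hup : m0 u p = 1 := by
      rw [hp, m0_add_right, m0_smul_right, m0_alt, hx1]
      generalize q0 x = t
      revert t; decide
    have hep : m0 (ee (inl 0)) p = 1 := by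
      rw [hp, m0_add_right, m0_smul_right, m0_comm (ee (inl 0)) u, hm1, hx2']
      generalize q0 x = t
      revert t; decide
    have hc1 : q0 (u + p) = 1 := by
      rw [q0_add, hq, hqp, hup]; decide
    have hc2 : q0 (p + ee (inl 0)) = 1 := by
      rw [q0_add, hqp, q0_single, m0_comm, hep]; decide
    refine ⟨(tv (u + p) hc1).comp (tv (p + ee (inl 0)) hc2), ?_⟩
    have him : m0 u (u + p) = 1 := by rw [m0_add_right, m0_alt, hup, zero_add]
    have s1 : (tv (u + p) hc1).g u = p := by
      rw [tv_apply, him, one_smul, cancel_left]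
    have him2 : m0 p (p + ee (inl 0)) = 1 := by
      rw [m0_add_right, m0_alt, m0_comm, hep, zero_add]
    rw [O0.comp_apply, s1, tv_apply, him2, one_smul, cancel_left]
  · -- single transvection
    have hc : q0 (u + ee (inl 0)) = 1 := by
      rw [q0_add, hq, q0_single, hm1]; decide
    refine ⟨tv (u + ee (inl 0)) hc, ?_⟩
    rw [tv_apply]
    have him : m0 u (u + ee (inl 0)) = 1 := by rw [m0_add_right, m0_alt, hm1, zero_add]
    rw [him, one_smul, cancel_left]

end Trans

section Trans2

variable {n : ℕ}

/-- transitivity on hyperbolic singular pairs -/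
lemma T2 (u w : (Fin (n+2) ⊕ Fin (n+2)) → F2) (hqu : q0 u = 0) (hqw : q0 w = 0)
    (hm : m0 u w = 1) :
    ∃ g : O0 (n+2), g.g u = ee (inl 0) ∧ g.g w = ee (inr 0) := by
  have hu : u ≠ 0 := by
    rintro rfl
    rw [m0_zero_left] at hm
    exact absurd hm (by decide)
  obtain ⟨g1, hg1⟩ := T1 u hqu hu
  set w' := g1.g w with hw'def
  have hqw' : q0 w' = 0 := by rw [hw'def, g1.hq, hqw]
  have hm' : m0 (ee (inl 0)) w' = 1 := by
    rw [← hg1, hw'def, g1.hm, hm]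
  set a := m0 (ee (inr 0)) w' with hadef
  set s := w' + a • ee (inl 0) + ee (inr 0) with hsdef
  have hE1s : m0 (ee (inl 0)) s = 0 := by
    rw [hsdef, m0_add_right, m0_add_right, m0_smul_right, hm', m0_ee_ll, m0_ee_lr]
    simp only [if_pos rfl, mul_zero, add_zero]
    decide
  have hF1s : m0 (ee (inr 0)) s = 0 := by
    rw [hsdef, m0_add_right, m0_add_right, m0_smul_right, ← hadef, m0_ee_rl, m0_ee_rr]
    simp only [if_pos rfl]
    generalize a = t
    revert t; decide
  have hw's : m0 w' s = 0 := by
    rw [hsdef, m0_add_right, m0_add_right, m0_smul_right, m0_alt,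
      m0_comm w' (ee (inl 0)), hm', m0_comm w' (ee (inr 0)), ← hadef]
    generalize a = t
    revert t; decide
  have hqs : q0 s = a := by
    rw [hsdef, q0_add, q0_expand, hqw', q0_single, q0_single,
      m0_comm w' (ee (inl 0)), hm', m0_add_left, m0_smul_left,
      m0_comm w' (ee (inr 0)), ← hadef, m0_ee_lr]
    simp only [if_pos rfl]
    generalize a = t
    revert t; decide
  rcases two_cases a with ha | ha
  · -- a = 0 : Eichler (or nothing)
    have hseq : s = w' + ee (inr 0) := by rw [hsdef, ha, zero_smul, add_zero]
    by_cases hs0 : s = 0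
    · have hwF : w' = ee (inr 0) := by
        apply eq_of_vadd_eq_zero
        rw [← hseq, hs0]
      exact ⟨g1, hg1, hwF⟩
    · have hqs0 : q0 s = 0 := by rw [hqs, ha]
      set E := ei (a := ee (inl 0)) (s := s) (q0_single (inl 0)) hqs0 hE1s with hEdef
      have hfix : E.g (ee (inl 0)) = ee (inl 0) := by
        rw [hEdef, ei_apply, m0_alt, hE1s, zero_smul, zero_smul, add_zero, add_zero]
      have him : E.g w' = ee (inr 0) := by
        rw [hEdef, ei_apply, m0_comm w' (ee (inl 0)), hm', hw's,
          zero_smul, add_zero, one_smul, hseq, cancel_left]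
      exact ⟨g1.comp E, by rw [O0.comp_apply, hg1, hfix],
        by rw [O0.comp_apply, ← hw'def, him]⟩
  · -- a = 1 : transvection
    have hqc : q0 (ee (inl 0) + s) = 1 := by
      rw [q0_add, q0_single, hqs, ha, hE1s]
      decide
    set g2 := tv (ee (inl 0) + s) hqc with hg2def
    have hfix : g2.g (ee (inl 0)) = ee (inl 0) := by
      rw [hg2def, tv_apply, m0_add_right, m0_alt, hE1s, add_zero, zero_smul, add_zero]
    have him : g2.g w' = ee (inr 0) := by
      rw [hg2def, tv_apply, m0_add_right, m0_comm w' (ee (inl 0)), hm',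
        hw's, add_zero, one_smul]
      rw [hsdef, ha, one_smul]
      have harr : w' + (ee (inl 0) + (w' + ee (inl 0) + ee (inr 0)))
          = (w' + w') + (ee (inl 0) + ee (inl 0)) + ee (inr 0) := by abel
      rw [harr, vadd_self, vadd_self, zero_add, zero_add]
    exact ⟨g1.comp g2, by rw [O0.comp_apply, hg1, hfix],
      by rw [O0.comp_apply, ← hw'def, him]⟩

end Trans2

section Trans3

variable {n : ℕ}

lemma fin01 : (0 : Fin (n+2)) ≠ 1 := by
  intro h
  have := congrArg Fin.val h
  simp at this

lemma fin10 : (1 : Fin (n+2)) ≠ 0 := fun h => fin01 h.symm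

/-- transitivity on orthogonal singular pairs -/
lemma T3 (u w : (Fin (n+2) ⊕ Fin (n+2)) → F2) (hqu : q0 u = 0) (hqw : q0 w = 0)
    (hm : m0 u w = 0) (hu : u ≠ 0) (hw : w ≠ 0) (huw : u ≠ w) :
    ∃ g : O0 (n+2), g.g u = ee (inl 0) ∧ g.g w = ee (inl 1) := by
  obtain ⟨g1, hg1⟩ := T1 u hqu hu
  set w' := g1.g w with hw'def
  have hqw' : q0 w' = 0 := by rw [hw'def, g1.hq, hqw]
  have hE1w' : m0 (ee (inl 0)) w' = 0 := by
    rw [← hg1, hw'def, g1.hm, hm]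
  have hw'0 : w' ≠ 0 := by
    intro h
    apply hw
    apply g1.g.injective
    rw [← hw'def, h, map_zero]
  have hw'E1 : w' ≠ ee (inl 0) := by
    intro h
    apply huw
    apply g1.g.injective
    rw [← hw'def, h, hg1]
  set a := m0 (ee (inr 0)) w' with hadef
  set s := w' + a • ee (inl 0) with hsdef
  have hE1s : m0 (ee (inl 0)) s = 0 := by
    rw [hsdef, m0_add_right, m0_smul_right, hE1w', m0_ee_ll]
    simp
  have hF1s : m0 (ee (inr 0)) s = 0 := by
    rw [hsdef, m0_add_right, m0_smul_right, ← hadef, m0_ee_rl, if_pos rfl]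
    generalize a = t; revert t; decide
  have hw's : m0 w' s = 0 := by
    rw [hsdef, m0_add_right, m0_smul_right, m0_alt, m0_comm w' (ee (inl 0)), hE1w']
    simp
  have hqs : q0 s = 0 := by
    rw [hsdef, q0_expand, hqw', q0_single, m0_comm w' (ee (inl 0)), hE1w']
    simp
  have hs0 : s ≠ 0 := by
    intro h
    have hweq : w' = a • ee (inl 0) := by
      apply eq_of_vadd_eq_zero
      rw [← hsdef] at *
      exact h
    rcases two_cases a with ha | ha
    · rw [ha, zero_smul] at hweq; exact hw'0 hweq
    · rw [ha, one_smul] at hweq; exact hw'E1 hweq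
  have hws' : w' = a • ee (inl 0) + s := by
    have step : a • ee (inl 0) + (w' + a • ee (inl 0)) = w' := by
      have harr : a • ee (inl 0) + (w' + a • ee (inl 0))
          = (a • ee (inl 0) + a • ee (inl 0)) + w' := by abel
      rw [harr, vadd_self, zero_add]
    rw [hsdef, step]
  set ν := m0 (ee (inl 1)) s with hνdef
  -- values of w' against E2 and arbitrary t supported away from w'-part
  have hw'E2 : m0 w' (ee (inl 1)) = ν := by
    rw [hws', m0_add_left, m0_smul_left, m0_ee_ll, m0_comm s (ee (inl 1)), ← hνdef]
    simp
  -- Stage A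
  have stageA : ∃ g2 : O0 (n+2), g2.g (ee (inl 0)) = ee (inl 0) ∧
      g2.g w' = a • ee (inl 0) + ee (inl 1) := by
    by_cases hsE2 : s = ee (inl 1)
    · exact ⟨O0.one, rfl, by rw [O0.one_apply, hws', hsE2]⟩
    rcases two_cases ν with hν | hν
    · -- ν = 0 : Eichler
      have ht : ∃ t, q0 t = 0 ∧ m0 s t = 1 ∧ m0 (ee (inl 1)) t = 1 ∧
          m0 (ee (inl 0)) t = 0 := by
        rcases two_cases (m0 (ee (inr 1)) s) with hl | hl
        · -- λ = 0, use a far coordinate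
          obtain ⟨j, hj⟩ := exists_one hs0
          have hj1 : j ≠ inl 0 := by
            intro h
            have : s (inl 0) = 0 := (m0_single_right' 0 s).symm.trans hF1s
            rw [h, this] at hj; exact absurd hj (by decide)
          have hj2 : j ≠ inr 0 := by
            intro h
            have : s (inr 0) = 0 := (m0_single_left 0 s).symm.trans hE1s
            rw [h, this] at hj; exact absurd hj (by decide)
          have hj3 : j ≠ inl 1 := by
            intro h
            have : s (inl 1) = 0 := (m0_single_right' 1 s).symm.trans hl
            rw [h, this] at hj; exact absurd hj (by decide)
          have hj4 : j ≠ inr 1 := by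
            intro h
            have : s (inr 1) = 0 := (m0_single_left 1 s).symm.trans (by rw [← hνdef]; exact hν)
            rw [h, this] at hj; exact absurd hj (by decide)
          refine ⟨ee (inr 1) + ee (swapIdx j), ?_, ?_, ?_, ?_⟩
          · rw [q0_add, q0_single, q0_single, m0_dual, ee_apply, if_neg hj4]
            decide
          · rw [m0_add_right, m0_comm s (ee (inr 1)), hl, m0_dual, hj, zero_add]
          · rw [m0_add_right, m0_ee_lr, if_pos rfl, m0_dual, ee_apply, if_neg hj3,
              add_zero]
          · rw [m0_add_right, m0_ee_lr, if_neg fin01, m0_dual, ee_apply, if_neg hj1,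
              add_zero]
        · -- λ = 1, take f2
          refine ⟨ee (inr 1), q0_single _, ?_, ?_, ?_⟩
          · rw [m0_comm s (ee (inr 1)), hl]
          · rw [m0_ee_lr, if_pos rfl]
          · rw [m0_ee_lr, if_neg fin01]
      obtain ⟨t, hqt, hst, hE2t, hE1t⟩ := ht
      have hqA : q0 (s + ee (inl 1)) = 0 := by
        rw [q0_add, hqs, q0_single, m0_comm s (ee (inl 1)), ← hνdef, hν]
        decide
      have hAt : m0 (s + ee (inl 1)) t = 0 := by
        rw [m0_add_left, hst, hE2t]
        decide
      set g2 := ei (a := s + ee (inl 1)) (s := t) hqA hqt hAt with hg2def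
      have hE1A : m0 (ee (inl 0)) (s + ee (inl 1)) = 0 := by
        rw [m0_add_right, hE1s, m0_ee_ll]
        decide
      have hfix : g2.g (ee (inl 0)) = ee (inl 0) := by
        rw [hg2def, ei_apply, hE1A, hE1t, zero_smul, zero_smul, add_zero, add_zero]
      have hw'A : m0 w' (s + ee (inl 1)) = 0 := by
        rw [m0_add_right, hw's, hw'E2, hν]
        decide
      have hw't : m0 w' t = 1 := by
        rw [hws', m0_add_left, m0_smul_left, hE1t, hst]
        generalize a = b; revert b; decide
      have him : g2.g w' = a • ee (inl 0) + ee (inl 1) := by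
        rw [hg2def, ei_apply, hw'A, hw't, zero_smul, add_zero, one_smul]
        rw [hws']
        have harr : a • ee (inl 0) + s + (s + ee (inl 1))
            = a • ee (inl 0) + (s + s) + ee (inl 1) := by abel
        rw [harr, vadd_self, add_zero]
      exact ⟨g2, hfix, him⟩
    · -- ν = 1 : transvection
      have hqc : q0 (s + ee (inl 1)) = 1 := by
        rw [q0_add, hqs, q0_single, m0_comm s (ee (inl 1)), ← hνdef, hν]
        decide
      set g2 := tv (s + ee (inl 1)) hqc with hg2def
      have hfix : g2.g (ee (inl 0)) = ee (inl 0) := by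
        rw [hg2def, tv_apply, m0_add_right, hE1s, m0_ee_ll, add_zero, zero_smul,
          add_zero]
      have him : g2.g w' = a • ee (inl 0) + ee (inl 1) := by
        rw [hg2def, tv_apply, m0_add_right, hw's, hw'E2, hν, zero_add, one_smul]
        rw [hws']
        have harr : a • ee (inl 0) + s + (s + ee (inl 1))
            = a • ee (inl 0) + (s + s) + ee (inl 1) := by abel
        rw [harr, vadd_self, add_zero]
      exact ⟨g2, hfix, him⟩
  obtain ⟨g2, hfix2, him2⟩ := stageA
  rcases two_cases a with ha | ha
  · refine ⟨g1.comp g2, ?_, ?_⟩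
    · rw [O0.comp_apply, hg1, hfix2]
    · rw [O0.comp_apply, ← hw'def, him2, ha, zero_smul, zero_add]
  · -- a = 1 : extra Eichler to remove the e1 component
    have hE1F2 : m0 (ee (inl (0 : Fin (n+2)))) (ee (inr 1)) = 0 := by
      rw [m0_ee_lr, if_neg fin01]
    set g3 := ei (a := ee (inl 0)) (s := ee (inr 1)) (q0_single _) (q0_single _)
      hE1F2 with hg3def
    have hfix3 : g3.g (ee (inl (0 : Fin (n+2)))) = ee (inl 0) := by
      rw [hg3def, ei_apply, m0_alt, hE1F2, zero_smul, zero_smul, add_zero, add_zero]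
    have him3 : g3.g (ee (inl (0 : Fin (n+2))) + ee (inl 1)) = ee (inl 1) := by
      rw [hg3def, ei_apply, m0_add_left, m0_alt, m0_ee_ll, add_zero, zero_smul,
        add_zero, m0_add_left, hE1F2, m0_ee_lr, if_pos rfl, zero_add, one_smul]
      have harr : ee (inl (0 : Fin (n+2))) + ee (inl 1) + ee (inl 0)
          = (ee (inl 0) + ee (inl 0)) + ee (inl 1) := by abel
      rw [harr, vadd_self, zero_add]
    refine ⟨(g1.comp g2).comp g3, ?_, ?_⟩
    · rw [O0.comp_apply, O0.comp_apply, hg1, hfix2, hfix3]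
    · rw [O0.comp_apply, O0.comp_apply, ← hw'def, him2, ha, one_smul, him3]

end Trans3

section Models

variable {n : ℕ}

/-- difference vectors of the four model tuples -/
def vtab (n : ℕ) : Fin 4 → Fin 3 → ((Fin (n+2) ⊕ Fin (n+2)) → F2) :=
  ![![0, 0, 0],
    ![0, 0, ee (inl 0)],
    ![0, ee (inl 0), ee (inl 1)],
    ![0, ee (inl 0), ee (inr 0)]]

/-- the four model tuples of quadratic refinements -/
def μmod (n : ℕ) (a : Fin 4) (i : Fin 3) (x : (Fin (n+2) ⊕ Fin (n+2)) → F2) : F2 :=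
  q0 x + m0 (vtab n a i) x

lemma q0_vtab (a : Fin 4) (i : Fin 3) : q0 (vtab n a i) = 0 := by
  fin_cases a <;> fin_cases i <;> first | exact q0_zero | exact q0_single _

lemma quadref_mu (a : Fin 4) (i : Fin 3) : IsQuadRef (m0 (k := n+2)) (μmod n a i) := by
  intro x y
  unfold μmod
  rw [m0_add_right (vtab n a i) x y]
  have key : ∀ M A B C vx vy : F2, M = A + B + C →
      M = (A + vx) + (B + vy) + (C + (vx + vy)) := by decide
  exact key _ _ _ _ _ _ (quadref_q0 x y)

/-- the standard plus structure -/
lemma plusType_q0 {k : ℕ} : IsPlusType k (m0 (k := k)) q0 := by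
  classical
  refine ⟨Pi.basisFun F2 (Fin k ⊕ Fin k), fun i j => ?_, fun i j => ?_,
    fun i j => ?_, fun i => ?_, fun i => ?_⟩ <;> simp only [Pi.basisFun_apply]
  · exact m0_ee_lr i j
  · exact m0_ee_ll i j
  · exact m0_ee_rr i j
  · exact q0_single (inl i)
  · exact q0_single (inr i)

/-- plus type for q0 + a singular linear term -/
lemma plusType_linear {k : ℕ} (v : (Fin k ⊕ Fin k) → F2) (hv : q0 v = 0) :
    IsPlusType k (m0 (k := k)) (fun x => q0 x + m0 v x) := by
  refine plus_transfer (tEquiv v) (tEquiv_m0 v) ?_ plusType_q0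
  intro x
  show q0 (tEquiv v x) + m0 v (tEquiv v x) = q0 x
  rw [tEquiv_q0, hv, mul_zero, add_zero, tEquiv_apply, m0_add_right, m0_smul_right,
    m0_alt, m0_comm v x]
  generalize q0 x = Q
  generalize m0 x v = A
  revert Q A; decide

lemma plus_mu (a : Fin 4) (i : Fin 3) : IsPlusType (n+2) (m0 (k := n+2)) (μmod n a i) :=
  plusType_linear (vtab n a i) (q0_vtab a i)

end Models

theorem Equiv.Perm.apply_inv_self {α : Type*} (f : Equiv.Perm α) (x : α) : f (f⁻¹ x) = x :=
  f.apply_symm_apply x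

section IsoLemmas

variable {s : ℕ} {V V' V'' : Type} [AddCommGroup V] [Module F2 V]
  [AddCommGroup V'] [Module F2 V'] [AddCommGroup V''] [Module F2 V'']

lemma TupleIso.trans' {m : V → V → F2} {μs : Fin s → V → F2}
    {m' : V' → V' → F2} {μs' : Fin s → V' → F2}
    {m'' : V'' → V'' → F2} {μs'' : Fin s → V'' → F2}
    (h1 : TupleIso m μs m' μs') (h2 : TupleIso m' μs' m'' μs'') :
    TupleIso m μs m'' μs'' := by
  obtain ⟨f, σ, hf, hμ⟩ := h1
  obtain ⟨g, τ, hg, hν⟩ := h2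
  refine ⟨f ≪≫ₗ g, τ * σ, fun x y => ?_, fun i x => ?_⟩
  · show m'' (g (f x)) (g (f y)) = m x y
    rw [hg, hf]
  · show μs'' (τ (σ i)) (g (f x)) = μs i x
    rw [hν, hμ]

lemma TupleIso.symm' {m : V → V → F2} {μs : Fin s → V → F2}
    {m' : V' → V' → F2} {μs' : Fin s → V' → F2}
    (h : TupleIso m μs m' μs') : TupleIso m' μs' m μs := by
  obtain ⟨f, σ, hf, hμ⟩ := h
  refine ⟨f.symm, σ⁻¹, fun x y => ?_, fun i x => ?_⟩
  · have h2 := hf (f.symm x) (f.symm y)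
    rw [f.apply_symm_apply, f.apply_symm_apply] at h2
    exact h2.symm
  · have h2 := hμ (σ⁻¹ i) (f.symm x)
    rw [Equiv.Perm.apply_inv_self, f.apply_symm_apply] at h2
    exact h2.symm

lemma TupleIso.perm' (m : V → V → F2) (μs : Fin s → V → F2) (π : Equiv.Perm (Fin s)) :
    TupleIso m μs m (fun i => μs (π i)) := by
  refine ⟨LinearEquiv.refl F2 V, π⁻¹, fun x y => rfl, fun i x => ?_⟩
  show μs (π (π⁻¹ i)) x = μs i x
  rw [Equiv.Perm.apply_inv_self]

/-- invariance of "all refinements equal" -/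
lemma iso_all_eq {m : V → V → F2} {μs : Fin s → V → F2}
    {m' : V' → V' → F2} {μs' : Fin s → V' → F2}
    (h : TupleIso m μs m' μs') (hall : ∀ i j, μs i = μs j) : ∀ i j, μs' i = μs' j := by
  obtain ⟨f, σ, hf, hμ⟩ := h
  intro i j
  funext y
  have h1 := hμ (σ⁻¹ i) (f.symm y)
  have h2 := hμ (σ⁻¹ j) (f.symm y)
  rw [Equiv.Perm.apply_inv_self, f.apply_symm_apply] at h1 h2
  rw [h1, h2, hall (σ⁻¹ i) (σ⁻¹ j)]

/-- invariance of "two refinements coincide" -/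
lemma iso_ex_eq {m : V → V → F2} {μs : Fin s → V → F2}
    {m' : V' → V' → F2} {μs' : Fin s → V' → F2}
    (h : TupleIso m μs m' μs') (hex : ∃ i j, i ≠ j ∧ μs i = μs j) :
    ∃ i j, i ≠ j ∧ μs' i = μs' j := by
  obtain ⟨f, σ, hf, hμ⟩ := h
  obtain ⟨i, j, hij, he⟩ := hex
  refine ⟨σ i, σ j, fun hc => hij (σ.injective hc), ?_⟩
  funext y
  have h1 := hμ i (f.symm y)
  have h2 := hμ j (f.symm y)
  rw [f.apply_symm_apply] at h1 h2
  rw [h1, h2, he]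

end IsoLemmas

section ChiInv

variable {k : ℕ}

/-- invariance of the Gauss sum of the total refinement -/
lemma iso_chi {m m' : ((Fin k ⊕ Fin k) → F2) → ((Fin k ⊕ Fin k) → F2) → F2}
    {μs μs' : Fin 3 → ((Fin k ⊕ Fin k) → F2) → F2}
    (h : TupleIso m μs m' μs') :
    ∑ x : (Fin k ⊕ Fin k) → F2, chi (μs 0 x + μs 1 x + μs 2 x)
      = ∑ x : (Fin k ⊕ Fin k) → F2, chi (μs' 0 x + μs' 1 x + μs' 2 x) := by
  obtain ⟨f, σ, hf, hμ⟩ := h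
  have key : ∀ x, μs 0 x + μs 1 x + μs 2 x
      = μs' 0 (f x) + μs' 1 (f x) + μs' 2 (f x) := by
    intro x
    have e1 : μs 0 x + μs 1 x + μs 2 x = ∑ i : Fin 3, μs i x := by
      rw [Fin.sum_univ_three]
    have e2 : μs' 0 (f x) + μs' 1 (f x) + μs' 2 (f x) = ∑ i : Fin 3, μs' i (f x) := by
      rw [Fin.sum_univ_three]
    rw [e1, e2, ← Equiv.sum_comp σ (fun i => μs' i (f x))]
    exact Finset.sum_congr rfl fun i _ => (hμ i x).symm
  calc ∑ x : (Fin k ⊕ Fin k) → F2, chi (μs 0 x + μs 1 x + μs 2 x)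
      = ∑ x : (Fin k ⊕ Fin k) → F2, chi (μs' 0 (f x) + μs' 1 (f x) + μs' 2 (f x)) := by
        exact Finset.sum_congr rfl fun x _ => by rw [key]
    _ = ∑ y : (Fin k ⊕ Fin k) → F2, chi (μs' 0 y + μs' 1 y + μs' 2 y) :=
        Equiv.sum_comp f.toEquiv (fun y => chi (μs' 0 y + μs' 1 y + μs' 2 y))

end ChiInv

section ModelFacts

variable {n : ℕ}

lemma mu_sum_eval (a : Fin 4) (x : (Fin (n+2) ⊕ Fin (n+2)) → F2) :
    μmod n a 0 x + μmod n a 1 x + μmod n a 2 x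
      = q0 x + m0 (vtab n a 1 + vtab n a 2) x := by
  have h0 : vtab n a 0 = 0 := by fin_cases a <;> rfl
  unfold μmod
  rw [h0, m0_zero_left, m0_add_left]
  generalize q0 x = Q
  generalize m0 (vtab n a 1) x = A
  generalize m0 (vtab n a 2) x = B
  revert Q A B; decide

lemma chi_model (a : Fin 4) :
    ∑ x : (Fin (n+2) ⊕ Fin (n+2)) → F2,
      chi (μmod n a 0 x + μmod n a 1 x + μmod n a 2 x)
      = chi (q0 (vtab n a 1 + vtab n a 2)) * 2 ^ (n+2) := by
  rw [show ∑ x : (Fin (n+2) ⊕ Fin (n+2)) → F2,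
      chi (μmod n a 0 x + μmod n a 1 x + μmod n a 2 x)
      = ∑ x : (Fin (n+2) ⊕ Fin (n+2)) → F2,
        chi (q0 x + m0 (vtab n a 1 + vtab n a 2) x) from
    Finset.sum_congr rfl fun x _ => by rw [mu_sum_eval]]
  exact sum_chi_linear _

lemma q0_w2 : q0 (vtab n 2 1 + vtab n 2 2) = 0 := by
  show q0 (ee (inl 0) + ee (inl 1)) = 0
  rw [q0_add, q0_single, q0_single, m0_ee_ll, zero_add, zero_add]

lemma q0_w3 : q0 (vtab n 3 1 + vtab n 3 2) = 1 := by
  show q0 (ee (inl 0) + ee (inr 0)) = 1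
  rw [q0_add, q0_single, q0_single, m0_ee_lr, if_pos rfl, zero_add, zero_add]

lemma mu_ne (a : Fin 4) (i j : Fin 3) (x : (Fin (n+2) ⊕ Fin (n+2)) → F2)
    (h : μmod n a i x ≠ μmod n a j x) : μmod n a i ≠ μmod n a j :=
  fun h' => h (congrFun h' x)

lemma mod0_all_eq : ∀ i j, μmod n 0 i = μmod n 0 j := by
  have h : ∀ i, vtab n 0 i = 0 := by intro i; fin_cases i <;> rfl
  intro i j
  unfold μmod
  rw [h i, h j]

lemma mu_eval (v x : (Fin (n+2) ⊕ Fin (n+2)) → F2) : q0 x + m0 v x = q0 x + m0 v x := rfl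

-- evaluation helper: μmod at a point
lemma mumod_apply (a : Fin 4) (i : Fin 3) (x : (Fin (n+2) ⊕ Fin (n+2)) → F2) :
    μmod n a i x = q0 x + m0 (vtab n a i) x := rfl

lemma mod1_not_all_eq : ¬ (∀ i j, μmod n 1 i = μmod n 1 j) := by
  intro h
  have := congrFun (h 0 2) (ee (inr 0))
  rw [mumod_apply, mumod_apply] at this
  rw [show vtab n 1 0 = 0 from rfl, show vtab n 1 2 = ee (inl 0) from rfl,
    m0_zero_left, m0_ee_lr, if_pos rfl] at this
  simp at this

lemma mod2_not_ex_eq : ¬ (∃ i j, i ≠ j ∧ μmod n 2 i = μmod n 2 j) := by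
  rintro ⟨i, j, hij, he⟩
  have d01 : μmod n 2 0 ≠ μmod n 2 1 := by
    refine mu_ne 2 0 1 (ee (inr 0)) ?_
    rw [mumod_apply, mumod_apply, show vtab n 2 0 = 0 from rfl,
      show vtab n 2 1 = ee (inl 0) from rfl, m0_zero_left, m0_ee_lr, if_pos rfl,
      q0_single]
    decide
  have d02 : μmod n 2 0 ≠ μmod n 2 2 := by
    refine mu_ne 2 0 2 (ee (inr 1)) ?_
    rw [mumod_apply, mumod_apply, show vtab n 2 0 = 0 from rfl,
      show vtab n 2 2 = ee (inl 1) from rfl, m0_zero_left, m0_ee_lr, if_pos rfl,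
      q0_single]
    decide
  have d12 : μmod n 2 1 ≠ μmod n 2 2 := by
    refine mu_ne 2 1 2 (ee (inr 0)) ?_
    rw [mumod_apply, mumod_apply, show vtab n 2 1 = ee (inl 0) from rfl,
      show vtab n 2 2 = ee (inl 1) from rfl, m0_ee_lr, m0_ee_lr, if_pos rfl,
      if_neg fin10, q0_single]
    decide
  fin_cases i <;> fin_cases j
  · exact hij rfl
  · exact d01 he
  · exact d02 he
  · exact d01 he.symm
  · exact hij rfl
  · exact d12 he
  · exact d02 he.symm
  · exact d12 he.symm
  · exact hij rfl

lemma mod3_not_ex_eq : ¬ (∃ i j, i ≠ j ∧ μmod n 3 i = μmod n 3 j) := by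
  rintro ⟨i, j, hij, he⟩
  have d01 : μmod n 3 0 ≠ μmod n 3 1 := by
    refine mu_ne 3 0 1 (ee (inr 0)) ?_
    rw [mumod_apply, mumod_apply, show vtab n 3 0 = 0 from rfl,
      show vtab n 3 1 = ee (inl 0) from rfl, m0_zero_left, m0_ee_lr, if_pos rfl,
      q0_single]
    decide
  have d02 : μmod n 3 0 ≠ μmod n 3 2 := by
    refine mu_ne 3 0 2 (ee (inl 0)) ?_
    rw [mumod_apply, mumod_apply, show vtab n 3 0 = 0 from rfl,
      show vtab n 3 2 = ee (inr 0) from rfl, m0_zero_left, m0_ee_rl, if_pos rfl,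
      q0_single]
    decide
  have d12 : μmod n 3 1 ≠ μmod n 3 2 := by
    refine mu_ne 3 1 2 (ee (inr 0)) ?_
    rw [mumod_apply, mumod_apply, show vtab n 3 1 = ee (inl 0) from rfl,
      show vtab n 3 2 = ee (inr 0) from rfl, m0_ee_lr, m0_ee_rr, if_pos rfl,
      q0_single]
    decide
  fin_cases i <;> fin_cases j
  · exact hij rfl
  · exact d01 he
  · exact d02 he
  · exact d01 he.symm
  · exact hij rfl
  · exact d12 he
  · exact d02 he.symm
  · exact d12 he.symm
  · exact hij rfl

lemma mod1_ex_eq : ∃ i j, i ≠ j ∧ μmod n 1 i = μmod n 1 j := by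
  refine ⟨0, 1, by decide, ?_⟩
  unfold μmod
  rw [show vtab n 1 0 = 0 from rfl, show vtab n 1 1 = 0 from rfl]

lemma mod0_ex_eq : ∃ i j, i ≠ j ∧ μmod n 0 i = μmod n 0 j :=
  ⟨0, 1, by decide, mod0_all_eq 0 1⟩

/-- the four models are pairwise non-isomorphic -/
lemma chi_ne23 : chi (q0 (vtab n 2 1 + vtab n 2 2)) * 2 ^ (n+2)
    ≠ chi (q0 (vtab n 3 1 + vtab n 3 2)) * 2 ^ (n+2) := by
  rw [q0_w2, q0_w3, chi_zero, chi_one]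
  have hpos : (0:ℤ) < 2 ^ (n + 2) := pow_pos (by norm_num) _
  omega

lemma models_noniso (a b : Fin 4) (hab : a ≠ b)
    (h : TupleIso (m0 (k := n+2)) (μmod n a) m0 (μmod n b)) : False := by
  have hall : (∀ i j, μmod n a i = μmod n a j) → (∀ i j, μmod n b i = μmod n b j) :=
    iso_all_eq h
  have hall' : (∀ i j, μmod n b i = μmod n b j) → (∀ i j, μmod n a i = μmod n a j) :=
    iso_all_eq (TupleIso.symm' h)
  have hex : (∃ i j, i ≠ j ∧ μmod n a i = μmod n a j) →
      (∃ i j, i ≠ j ∧ μmod n b i = μmod n b j) := iso_ex_eq h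
  have hex' : (∃ i j, i ≠ j ∧ μmod n b i = μmod n b j) →
      (∃ i j, i ≠ j ∧ μmod n a i = μmod n a j) := iso_ex_eq (TupleIso.symm' h)
  have hchi := iso_chi h
  rw [chi_model, chi_model] at hchi
  fin_cases a <;> fin_cases b
  · exact hab rfl
  · exact mod1_not_all_eq (hall mod0_all_eq)
  · exact mod2_not_ex_eq (hex mod0_ex_eq)
  · exact mod3_not_ex_eq (hex mod0_ex_eq)
  · exact mod1_not_all_eq (hall' mod0_all_eq)
  · exact hab rfl
  · exact mod2_not_ex_eq (hex mod1_ex_eq)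
  · exact mod3_not_ex_eq (hex mod1_ex_eq)
  · exact mod2_not_ex_eq (hex' mod0_ex_eq)
  · exact mod2_not_ex_eq (hex' mod1_ex_eq)
  · exact hab rfl
  · exact chi_ne23 hchi
  · exact mod3_not_ex_eq (hex' mod0_ex_eq)
  · exact mod3_not_ex_eq (hex' mod1_ex_eq)
  · exact chi_ne23 hchi.symm
  · exact hab rfl

end ModelFacts

section Classify

variable {n : ℕ} {V : Type} [AddCommGroup V] [Module F2 V]

lemma pull_rep {m : V → V → F2} (f : V ≃ₗ[F2] ((Fin (n+2) ⊕ Fin (n+2)) → F2))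
    (hf : ∀ x y, m0 (f x) (f y) = m x y) {μ : V → F2}
    (hq : IsQuadRef m μ) (hp : IsPlusType (n+2) m μ) :
    ∃ v, q0 v = 0 ∧ ∀ x, μ x = q0 (f x) + m0 v (f x) := by
  have hρq : IsQuadRef m0 (fun y => μ (f.symm y)) := by
    intro x y
    have hb := hf (f.symm x) (f.symm y)
    rw [f.apply_symm_apply, f.apply_symm_apply] at hb
    show m0 x y = μ (f.symm x) + μ (f.symm y) + μ (f.symm (x + y))
    rw [hb, hq (f.symm x) (f.symm y), ← map_add]
  have hρp : IsPlusType (n+2) m0 (fun y => μ (f.symm y)) :=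
    plus_transfer f hf
      (fun x => by show μ (f.symm (f x)) = μ x; rw [f.symm_apply_apply]) hp
  obtain ⟨v, h1, h2⟩ := rep_linear hρq hρp
  refine ⟨v, h1, fun x => ?_⟩
  have h3 := h2 (f x)
  rwa [f.symm_apply_apply] at h3

lemma case_all {m : V → V → F2} {μs : Fin 3 → V → F2}
    (hAlt : IsAltNondeg m) (h0q : IsQuadRef m (μs 0)) (h0p : IsPlusType (n+2) m (μs 0))
    (h1 : μs 1 = μs 0) (h2 : μs 2 = μs 0) :
    TupleIso m μs (m0 (k := n+2)) (μmod n 0) := by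
  obtain ⟨f, hf, hq⟩ := plus_coord hAlt h0q h0p
  refine ⟨f, 1, fun x y => hf x y, fun i x => ?_⟩
  show μmod n 0 ((1 : Equiv.Perm (Fin 3)) i) (f x) = μs i x
  rw [Equiv.Perm.one_apply]
  have hv : vtab n 0 i = 0 := by fin_cases i <;> rfl
  rw [mumod_apply, hv, m0_zero_left, add_zero, hq]
  fin_cases i
  · rfl
  · exact (congrFun h1 x).symm
  · exact (congrFun h2 x).symm

lemma case_two {m : V → V → F2} {μs : Fin 3 → V → F2}
    (hAlt : IsAltNondeg m)
    (h0q : IsQuadRef m (μs 0)) (h0p : IsPlusType (n+2) m (μs 0))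
    (h2q : IsQuadRef m (μs 2)) (h2p : IsPlusType (n+2) m (μs 2))
    (h10 : μs 1 = μs 0) (h20 : μs 2 ≠ μs 0) :
    TupleIso m μs (m0 (k := n+2)) (μmod n 1) := by
  obtain ⟨f, hf, hq⟩ := plus_coord hAlt h0q h0p
  obtain ⟨v, hqv, hrep⟩ := pull_rep f hf h2q h2p
  have hv0 : v ≠ 0 := by
    rintro rfl
    apply h20
    funext x
    rw [hrep x, m0_zero_left, add_zero, hq]
  obtain ⟨g, hg⟩ := T1 v hqv hv0
  have K0 : ∀ x, μmod n 1 0 (g.g (f x)) = μs 0 x := by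
    intro x
    rw [mumod_apply, show vtab n 1 0 = 0 from rfl, m0_zero_left, add_zero, g.hq, hq]
  have K1 : ∀ x, μmod n 1 1 (g.g (f x)) = μs 1 x := by
    intro x
    rw [mumod_apply, show vtab n 1 1 = 0 from rfl, m0_zero_left, add_zero, g.hq, hq]
    exact (congrFun h10 x).symm
  have K2 : ∀ x, μmod n 1 2 (g.g (f x)) = μs 2 x := by
    intro x
    rw [mumod_apply, show vtab n 1 2 = ee (inl 0) from rfl, g.hq, ← hg, g.hm,
      ← hrep x]
  refine ⟨f ≪≫ₗ g.g, 1, fun x y => ?_, fun i x => ?_⟩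
  · show m0 (g.g (f x)) (g.g (f y)) = m x y
    rw [g.hm, hf]
  · show μmod n 1 ((1 : Equiv.Perm (Fin 3)) i) (g.g (f x)) = μs i x
    rw [Equiv.Perm.one_apply]
    fin_cases i
    · exact K0 x
    · exact K1 x
    · exact K2 x

lemma case_distinct {m : V → V → F2} {μs : Fin 3 → V → F2}
    (hAlt : IsAltNondeg m)
    (hμ : ∀ i : Fin 3, IsQuadRef m (μs i) ∧ IsPlusType (n+2) m (μs i))
    (hd01 : μs 0 ≠ μs 1) (hd02 : μs 0 ≠ μs 2) (hd12 : μs 1 ≠ μs 2) :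
    ∃ a : Fin 4, TupleIso m μs (m0 (k := n+2)) (μmod n a) := by
  obtain ⟨f, hf, hq⟩ := plus_coord hAlt (hμ 0).1 (hμ 0).2
  obtain ⟨v1, hqv1, hrep1⟩ := pull_rep f hf (hμ 1).1 (hμ 1).2
  obtain ⟨v2, hqv2, hrep2⟩ := pull_rep f hf (hμ 2).1 (hμ 2).2
  have hv1 : v1 ≠ 0 := by
    rintro rfl
    apply hd01
    funext x
    rw [hrep1 x, m0_zero_left, add_zero, hq]
  have hv2 : v2 ≠ 0 := by
    rintro rfl
    apply hd02
    funext x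
    rw [hrep2 x, m0_zero_left, add_zero, hq]
  have hv12 : v1 ≠ v2 := by
    rintro rfl
    apply hd12
    funext x
    rw [hrep1 x, hrep2 x]
  rcases two_cases (m0 v1 v2) with hc | hc
  · -- orthogonal : model 2
    obtain ⟨g, hg1, hg2⟩ := T3 v1 v2 hqv1 hqv2 hc hv1 hv2 hv12
    refine ⟨2, f ≪≫ₗ g.g, 1, fun x y => ?_, fun i x => ?_⟩
    · show m0 (g.g (f x)) (g.g (f y)) = m x y
      rw [g.hm, hf]
    · show μmod n 2 ((1 : Equiv.Perm (Fin 3)) i) (g.g (f x)) = μs i x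
      rw [Equiv.Perm.one_apply]
      have K0 : μmod n 2 0 (g.g (f x)) = μs 0 x := by
        rw [mumod_apply, show vtab n 2 0 = 0 from rfl, m0_zero_left, add_zero,
          g.hq, hq]
      have K1 : μmod n 2 1 (g.g (f x)) = μs 1 x := by
        rw [mumod_apply, show vtab n 2 1 = ee (inl 0) from rfl, g.hq, ← hg1, g.hm,
          ← hrep1 x]
      have K2 : μmod n 2 2 (g.g (f x)) = μs 2 x := by
        rw [mumod_apply, show vtab n 2 2 = ee (inl 1) from rfl, g.hq, ← hg2, g.hm,
          ← hrep2 x]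
      fin_cases i
      · exact K0
      · exact K1
      · exact K2
  · -- hyperbolic : model 3
    obtain ⟨g, hg1, hg2⟩ := T2 v1 v2 hqv1 hqv2 hc
    refine ⟨3, f ≪≫ₗ g.g, 1, fun x y => ?_, fun i x => ?_⟩
    · show m0 (g.g (f x)) (g.g (f y)) = m x y
      rw [g.hm, hf]
    · show μmod n 3 ((1 : Equiv.Perm (Fin 3)) i) (g.g (f x)) = μs i x
      rw [Equiv.Perm.one_apply]
      have K0 : μmod n 3 0 (g.g (f x)) = μs 0 x := by
        rw [mumod_apply, show vtab n 3 0 = 0 from rfl, m0_zero_left, add_zero,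
          g.hq, hq]
      have K1 : μmod n 3 1 (g.g (f x)) = μs 1 x := by
        rw [mumod_apply, show vtab n 3 1 = ee (inl 0) from rfl, g.hq, ← hg1, g.hm,
          ← hrep1 x]
      have K2 : μmod n 3 2 (g.g (f x)) = μs 2 x := by
        rw [mumod_apply, show vtab n 3 2 = ee (inr 0) from rfl, g.hq, ← hg2, g.hm,
          ← hrep2 x]
      fin_cases i
      · exact K0
      · exact K1
      · exact K2

/-- explicit permutations of Fin 3 -/
def σswap : Equiv.Perm (Fin 3) := ⟨![0, 2, 1], ![0, 2, 1], by decide, by decide⟩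

def σcyc : Equiv.Perm (Fin 3) := ⟨![1, 2, 0], ![2, 0, 1], by decide, by decide⟩

/-- every admissible tuple is isomorphic to a model tuple on the coordinate space -/
lemma classify (m : V → V → F2) (μs : Fin 3 → V → F2)
    (hAlt : IsAltNondeg m)
    (hμ : ∀ i : Fin 3, IsQuadRef m (μs i) ∧ IsPlusType (n+2) m (μs i)) :
    ∃ a : Fin 4, TupleIso m μs (m0 (k := n+2)) (μmod n a) := by
  by_cases h01 : μs 0 = μs 1
  · by_cases h02 : μs 0 = μs 2
    · exact ⟨0, case_all hAlt (hμ 0).1 (hμ 0).2 h01.symm h02.symm⟩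
    · exact ⟨1, case_two hAlt (hμ 0).1 (hμ 0).2 (hμ 2).1 (hμ 2).2 h01.symm
        (fun h => h02 h.symm)⟩
  · by_cases h02 : μs 0 = μs 2
    · -- μs 0 = μs 2 ≠ μs 1 : permute with σswap, νs = (μs 0, μs 2, μs 1)
      have hcase : TupleIso m (fun i => μs (σswap i)) (m0 (k := n+2)) (μmod n 1) :=
        case_two hAlt (hμ 0).1 (hμ 0).2 (hμ 1).1 (hμ 1).2 h02.symm
          (fun h => h01 h.symm)
      exact ⟨1, TupleIso.trans' (TupleIso.perm' m μs σswap) hcase⟩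
    · by_cases h12 : μs 1 = μs 2
      · -- μs 1 = μs 2 ≠ μs 0 : permute with σcyc, νs = (μs 1, μs 2, μs 0)
        have hcase : TupleIso m (fun i => μs (σcyc i)) (m0 (k := n+2)) (μmod n 1) :=
          case_two hAlt (hμ 1).1 (hμ 1).2 (hμ 0).1 (hμ 0).2 h12.symm
            (fun h => h01 h)
        exact ⟨1, TupleIso.trans' (TupleIso.perm' m μs σcyc) hcase⟩
      · exact case_distinct hAlt hμ h01 h02 h12

end Classify

section Final

def idxEquiv (k : ℕ) : (Fin k ⊕ Fin k) ≃ Fin (2 * k) :=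
  finSumFinEquiv.trans (finCongr (by ring))

def Lk (k : ℕ) : ((Fin k ⊕ Fin k) → F2) ≃ₗ[F2] (Fin (2 * k) → F2) :=
  (LinearEquiv.funCongrLeft F2 F2 (idxEquiv k)).symm

variable {n : ℕ}

/-- the four model forms transported to `Fin (2k)` coordinates -/
def Mfin (n : ℕ) (x y : Fin (2 * (n+2)) → F2) : F2 :=
  m0 ((Lk (n+2)).symm x) ((Lk (n+2)).symm y)

def Mufin (n : ℕ) (a : Fin 4) (i : Fin 3) (x : Fin (2 * (n+2)) → F2) : F2 :=
  μmod n a i ((Lk (n+2)).symm x)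

lemma iso_push (a : Fin 4) :
    TupleIso (m0 (k := n+2)) (μmod n a) (Mfin n) (Mufin n a) := by
  refine ⟨Lk (n+2), 1, fun x y => ?_, fun i x => ?_⟩
  · show m0 ((Lk (n+2)).symm (Lk (n+2) x)) ((Lk (n+2)).symm (Lk (n+2) y)) = m0 x y
    rw [LinearEquiv.symm_apply_apply, LinearEquiv.symm_apply_apply]
  · show μmod n a ((1 : Equiv.Perm (Fin 3)) i) ((Lk (n+2)).symm (Lk (n+2) x))
      = μmod n a i x
    rw [Equiv.Perm.one_apply, LinearEquiv.symm_apply_apply]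

lemma alt_fin : IsAltNondeg (Mfin n) := by
  refine ⟨fun x y z => ?_, fun x y z => ?_, fun x => ?_, fun x h => ?_⟩
  · show m0 ((Lk (n+2)).symm (x + y)) _ = _
    rw [map_add, m0_add_left]
    rfl
  · show m0 _ ((Lk (n+2)).symm (y + z)) = _
    rw [map_add, m0_add_right]
    rfl
  · exact m0_alt _
  · have h2 : ∀ y0, m0 ((Lk (n+2)).symm x) y0 = 0 := by
      intro y0
      have h3 := h (Lk (n+2) y0)
      unfold Mfin at h3
      rwa [LinearEquiv.symm_apply_apply] at h3
    have h3 := m0_nondeg _ h2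
    have h4 := congrArg (Lk (n+2)) h3
    rwa [LinearEquiv.apply_symm_apply, map_zero] at h4

lemma quad_fin (a : Fin 4) (i : Fin 3) : IsQuadRef (Mfin n) (Mufin n a i) := by
  intro x y
  show m0 ((Lk (n+2)).symm x) ((Lk (n+2)).symm y) = _
  unfold Mufin
  rw [map_add]
  exact quadref_mu a i _ _

lemma plus_fin (a : Fin 4) (i : Fin 3) : IsPlusType (n+2) (Mfin n) (Mufin n a i) := by
  refine plus_transfer (Lk (n+2)) (fun x y => ?_) (fun x => ?_) (plus_mu a i)
  · show m0 ((Lk (n+2)).symm (Lk (n+2) x)) ((Lk (n+2)).symm (Lk (n+2) y)) = m0 x y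
    rw [LinearEquiv.symm_apply_apply, LinearEquiv.symm_apply_apply]
  · show μmod n a i ((Lk (n+2)).symm (Lk (n+2) x)) = μmod n a i x
    rw [LinearEquiv.symm_apply_apply]

lemma noniso_fin (a b : Fin 4) (hab : a ≠ b) :
    ¬ TupleIso (Mfin n) (Mufin n a) (Mfin n) (Mufin n b) := fun h =>
  models_noniso a b hab
    (TupleIso.trans' (TupleIso.trans' (iso_push a) h) (TupleIso.symm' (iso_push b)))

end Final

/-- For `k ≥ 2` there are exactly four isomorphism classes of tuples
`(V, m, μ₁, μ₂, μ₃)` with `V` of dimension `2k` over `𝔽₂`, `m` nondegenerate alternating,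
and `μ₁, μ₂, μ₃` quadratic refinements of plus type: there are four pairwise
non-isomorphic such tuples such that every such tuple is isomorphic to one of them. -/
theorem four_classes_of_triples (k : ℕ) (hk : 2 ≤ k) :
    ∃ (M : Fin 4 → ((Fin (2 * k) → ZMod 2) → (Fin (2 * k) → ZMod 2) → ZMod 2))
      (Mu : Fin 4 → Fin 3 → (Fin (2 * k) → ZMod 2) → ZMod 2),
      (∀ a : Fin 4, IsAltNondeg (M a) ∧
        ∀ i : Fin 3, IsQuadRef (M a) (Mu a i) ∧ IsPlusType k (M a) (Mu a i)) ∧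
      (∀ a b : Fin 4, a ≠ b → ¬ TupleIso (M a) (Mu a) (M b) (Mu b)) ∧
      (∀ (V : Type) [AddCommGroup V] [Module (ZMod 2) V]
          (m : V → V → ZMod 2) (μs : Fin 3 → V → ZMod 2),
        Module.finrank (ZMod 2) V = 2 * k →
        IsAltNondeg m →
        (∀ i : Fin 3, IsQuadRef m (μs i) ∧ IsPlusType k m (μs i)) →
        ∃ a : Fin 4, TupleIso m μs (M a) (Mu a)) := by
  obtain ⟨n, rfl⟩ : ∃ n, k = n + 2 := ⟨k - 2, by omega⟩
  refine ⟨fun _ => Mfin n, Mufin n, ?_, ?_, ?_⟩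
  · exact fun a => ⟨alt_fin, fun i => ⟨quad_fin a i, plus_fin a i⟩⟩
  · exact fun a b hab => noniso_fin a b hab
  · intro V _ _ m μs _ hAlt hprops
    obtain ⟨a, hiso⟩ := classify m μs hAlt hprops
    exact ⟨a, TupleIso.trans' hiso (iso_push a)⟩

end
end
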